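/- arXiv:1305.5836 — 6 statements merged into one kernel-verified Lean document; each statement's English description precedes it below -/
import Mathlib

section
/- Suppose g is six times continuously differentiable on [x-h, x+h] with h > 0. Then there exists ω ∈ (x-h, x+h) such that (1/12)·[g''(x-h) + 10·g''(x) + g''(x+h)] − (1/h²)·[g(x-h) − 2·g(x) + g(x+h)] = (h⁴/240)·g⁽⁶⁾(ω). -/
set_option maxHeartbeats 1000000 in
/-- Lemma 2.1 of the paper: the fourth-order compact relation between second
derivatives and the central second difference, with a sixth-derivative
mean-value remainder. -/
theorem compact_second_difference_mean_value
    (g : ℝ → ℝ) (x h : ℝ) (hh : 0 < h)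
    (hg : ContDiffOn ℝ 6 g (Set.Icc (x - h) (x + h))) :
    ∃ ω ∈ Set.Ioo (x - h) (x + h),
      (1 / 12) * (iteratedDerivWithin 2 g (Set.Icc (x - h) (x + h)) (x - h)
          + 10 * iteratedDerivWithin 2 g (Set.Icc (x - h) (x + h)) x
          + iteratedDerivWithin 2 g (Set.Icc (x - h) (x + h)) (x + h))
        - (1 / h ^ 2) * (g (x - h) - 2 * g x + g (x + h))
      = (h ^ 4 / 240) * iteratedDerivWithin 6 g (Set.Icc (x - h) (x + h)) ω := by
  have hxx : x - h < x + h := by linarith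
  set I := Set.Icc (x - h) (x + h) with hIdef
  have hI : UniqueDiffOn ℝ I := uniqueDiffOn_Icc hxx
  set G : ℕ → ℝ → ℝ := fun k => iteratedDerivWithin k g I with hGdef
  -- derivative of G k at interior points
  have hGd : ∀ k, k < 6 → ∀ p ∈ Set.Ioo (x - h) (x + h), HasDerivAt (G k) (G (k+1) p) p := by
    intro k hk p hp
    have hmem : p ∈ I := Set.Ioo_subset_Icc_self hp
    have hdiff : DifferentiableOn ℝ (G k) I :=
      hg.differentiableOn_iteratedDerivWithin (by exact_mod_cast hk) hI
    have h1 : HasDerivWithinAt (G k) (derivWithin (G k) I p) I p :=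
      (hdiff p hmem).hasDerivWithinAt
    have h2 : derivWithin (G k) I p = G (k+1) p :=
      by show derivWithin (iteratedDerivWithin k g I) I p = iteratedDerivWithin (k+1) g I p; rw [iteratedDerivWithin_succ]
    rw [h2] at h1
    exact h1.hasDerivAt (Icc_mem_nhds hp.1 hp.2)
  have hGc : ∀ k, k ≤ 6 → ContinuousOn (G k) I := by
    intro k hk
    exact hg.continuousOn_iteratedDerivWithin (by exact_mod_cast hk) hI
  set U : ℕ → ℝ → ℝ := fun k t => G k (x + t) + (-1 : ℝ)^k * G k (x - t) with hUdef
  have hUd : ∀ k, k < 6 → ∀ t ∈ Set.Ioo (-h) h, HasDerivAt (U k) (U (k+1) t) t := by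
    intro k hk t ht
    have h1 : x + t ∈ Set.Ioo (x - h) (x + h) := ⟨by linarith [ht.1], by linarith [ht.2]⟩
    have h2 : x - t ∈ Set.Ioo (x - h) (x + h) := ⟨by linarith [ht.2], by linarith [ht.1]⟩
    have d1 : HasDerivAt (fun t => G k (x + t)) (G (k+1) (x + t)) t := by
      have ha : HasDerivAt (fun t : ℝ => x + t) 1 t := (hasDerivAt_id t).const_add x
      simpa [Function.comp_def] using (hGd k hk _ h1).comp t ha
    have d2 : HasDerivAt (fun t => G k (x - t)) (-(G (k+1) (x - t))) t := by
      have ha : HasDerivAt (fun t : ℝ => x - t) (-1) t := (hasDerivAt_id t).const_sub x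
      simpa [Function.comp_def] using (hGd k hk _ h2).comp t ha
    have := d1.add (d2.const_mul ((-1 : ℝ)^k))
    refine this.congr_deriv ?_
    simp only [hUdef]
    rw [pow_succ]; ring
  have hUc : ∀ k, k ≤ 6 → ContinuousOn (U k) (Set.Icc (-h) h) := by
    intro k hk
    have m1 : Set.MapsTo (fun t : ℝ => x + t) (Set.Icc (-h) h) I := by
      intro t ht; simp only [Set.mem_Icc, hIdef] at ht ⊢; constructor <;> linarith
    have m2 : Set.MapsTo (fun t : ℝ => x - t) (Set.Icc (-h) h) I := by
      intro t ht; simp only [Set.mem_Icc, hIdef] at ht ⊢; constructor <;> linarith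
    have c1 : ContinuousOn (fun t => G k (x + t)) (Set.Icc (-h) h) :=
      (hGc k hk).comp (continuous_const.add continuous_id).continuousOn m1
    have c2 : ContinuousOn (fun t => G k (x - t)) (Set.Icc (-h) h) :=
      (hGc k hk).comp (continuous_const.sub continuous_id).continuousOn m2
    exact c1.add (continuousOn_const.mul c2)
  -- values at 0
  have hU10 : U 1 0 = 0 := by simp only [hUdef, add_zero, sub_zero]; ring
  have hU30 : U 3 0 = 0 := by simp only [hUdef, add_zero, sub_zero]; ring
  have hU50 : U 5 0 = 0 := by simp only [hUdef, add_zero, sub_zero]; ring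
  -- derivatives of the auxiliary functions
  have hsubIoo : ∀ {c : ℝ}, c ≤ h → Set.Ioo (0:ℝ) c ⊆ Set.Ioo (-h) h := by
    intro c hc t ht; exact ⟨by linarith [ht.1], by linarith [ht.2]⟩
  have dN0 : ∀ t ∈ Set.Ioo (0:ℝ) h, HasDerivAt
      (fun t => t^2/12*(U 2 t + 5*U 2 0) - (U 0 t - U 0 0))
      (t/6*(U 2 t + 5*U 2 0) + t^2/12*U 3 t - U 1 t) t := by
    intro t ht
    have ht' : t ∈ Set.Ioo (-h) h := hsubIoo le_rfl ht
    have d0 := hUd 0 (by norm_num) t ht'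
    have d2 := hUd 2 (by norm_num) t ht'
    have H := (((hasDerivAt_pow 2 t).div_const 12).mul (d2.add_const (5*U 2 0))).sub
      (d0.sub_const (U 0 0))
    refine H.congr_deriv ?_
    push_cast; simp only [hUdef, id_eq]; ring
  have dN1 : ∀ t ∈ Set.Ioo (0:ℝ) h, HasDerivAt
      (fun t => t/6*(U 2 t + 5*U 2 0) + t^2/12*U 3 t - U 1 t)
      (5/6*(U 2 0 - U 2 t) + t/3*U 3 t + t^2/12*U 4 t) t := by
    intro t ht
    have ht' : t ∈ Set.Ioo (-h) h := hsubIoo le_rfl ht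
    have d1 := hUd 1 (by norm_num) t ht'
    have d2 := hUd 2 (by norm_num) t ht'
    have d3 := hUd 3 (by norm_num) t ht'
    have H := ((((hasDerivAt_id t).div_const 6).mul (d2.add_const (5*U 2 0))).add
      (((hasDerivAt_pow 2 t).div_const 12).mul d3)).sub d1
    refine H.congr_deriv ?_
    push_cast; simp only [hUdef, id_eq]; ring
  have dN2 : ∀ t ∈ Set.Ioo (0:ℝ) h, HasDerivAt
      (fun t => 5/6*(U 2 0 - U 2 t) + t/3*U 3 t + t^2/12*U 4 t)
      (-(1/2)*U 3 t + t/2*U 4 t + t^2/12*U 5 t) t := by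
    intro t ht
    have ht' : t ∈ Set.Ioo (-h) h := hsubIoo le_rfl ht
    have d2 := hUd 2 (by norm_num) t ht'
    have d3 := hUd 3 (by norm_num) t ht'
    have d4 := hUd 4 (by norm_num) t ht'
    have H := (((d2.const_sub (U 2 0)).const_mul (5/6)).add
      (((hasDerivAt_id t).div_const 3).mul d3)).add
      (((hasDerivAt_pow 2 t).div_const 12).mul d4)
    refine H.congr_deriv ?_
    push_cast; simp only [hUdef, id_eq]; ring
  have dN3 : ∀ t ∈ Set.Ioo (0:ℝ) h, HasDerivAt
      (fun t => -(1/2)*U 3 t + t/2*U 4 t + t^2/12*U 5 t)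
      (2/3*t*U 5 t + t^2/12*U 6 t) t := by
    intro t ht
    have ht' : t ∈ Set.Ioo (-h) h := hsubIoo le_rfl ht
    have d3 := hUd 3 (by norm_num) t ht'
    have d4 := hUd 4 (by norm_num) t ht'
    have d5 := hUd 5 (by norm_num) t ht'
    have H := ((d3.const_mul (-(1/2))).add
      (((hasDerivAt_id t).div_const 2).mul d4)).add
      (((hasDerivAt_pow 2 t).div_const 12).mul d5)
    refine H.congr_deriv ?_
    push_cast; simp only [hUdef, id_eq]; ring
  -- continuity on [0,h]
  have hsubIcc : Set.Icc (0:ℝ) h ⊆ Set.Icc (-h) h := Set.Icc_subset_Icc (by linarith) le_rfl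
  have cU : ∀ k, k ≤ 6 → ContinuousOn (U k) (Set.Icc (0:ℝ) h) :=
    fun k hk => (hUc k hk).mono hsubIcc
  have cN0 : ContinuousOn (fun t => t^2/12*(U 2 t + 5*U 2 0) - (U 0 t - U 0 0))
      (Set.Icc (0:ℝ) h) :=
    (((continuousOn_id.pow 2).div_const 12).mul ((cU 2 (by norm_num)).add
      continuousOn_const)).sub ((cU 0 (by norm_num)).sub continuousOn_const)
  have cN1 : ContinuousOn (fun t => t/6*(U 2 t + 5*U 2 0) + t^2/12*U 3 t - U 1 t)
      (Set.Icc (0:ℝ) h) :=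
    (((continuousOn_id.div_const 6).mul ((cU 2 (by norm_num)).add continuousOn_const)).add
      (((continuousOn_id.pow 2).div_const 12).mul (cU 3 (by norm_num)))).sub
      (cU 1 (by norm_num))
  have cN2 : ContinuousOn (fun t => 5/6*(U 2 0 - U 2 t) + t/3*U 3 t + t^2/12*U 4 t)
      (Set.Icc (0:ℝ) h) :=
    ((continuousOn_const.mul (continuousOn_const.sub (cU 2 (by norm_num)))).add
      ((continuousOn_id.div_const 3).mul (cU 3 (by norm_num)))).add
      (((continuousOn_id.pow 2).div_const 12).mul (cU 4 (by norm_num)))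
  have cN3 : ContinuousOn (fun t => -(1/2)*U 3 t + t/2*U 4 t + t^2/12*U 5 t)
      (Set.Icc (0:ℝ) h) :=
    ((continuousOn_const.mul (cU 3 (by norm_num))).add
      ((continuousOn_id.div_const 2).mul (cU 4 (by norm_num)))).add
      (((continuousOn_id.pow 2).div_const 12).mul (cU 5 (by norm_num)))
  -- derivatives of the power comparison functions
  have dP6 : ∀ t : ℝ, HasDerivAt (fun t => t^6) (6*t^5) t := by
    intro t; have := hasDerivAt_pow 6 t; norm_num at this; exact this
  have dP5 : ∀ t : ℝ, HasDerivAt (fun t : ℝ => 6*t^5) (30*t^4) t := by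
    intro t
    have := (hasDerivAt_pow 5 t).const_mul (6:ℝ)
    refine this.congr_deriv ?_; push_cast; ring
  have dP4 : ∀ t : ℝ, HasDerivAt (fun t : ℝ => 30*t^4) (120*t^3) t := by
    intro t
    have := (hasDerivAt_pow 4 t).const_mul (30:ℝ)
    refine this.congr_deriv ?_; push_cast; ring
  have dP3 : ∀ t : ℝ, HasDerivAt (fun t : ℝ => 120*t^3) (360*t^2) t := by
    intro t
    have := (hasDerivAt_pow 3 t).const_mul (120:ℝ)
    refine this.congr_deriv ?_; push_cast; ring
  -- Cauchy mean value theorem, five times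
  obtain ⟨t₁, ht₁, e₁⟩ := exists_ratio_hasDerivAt_eq_ratio_slope
    (fun t => t^2/12*(U 2 t + 5*U 2 0) - (U 0 t - U 0 0))
    (fun t => t/6*(U 2 t + 5*U 2 0) + t^2/12*U 3 t - U 1 t) hh cN0 dN0
    (fun t => t^6) (fun t => 6*t^5) ((continuous_pow 6).continuousOn) (fun t _ => dP6 t)
  obtain ⟨t₂, ht₂, e₂⟩ := exists_ratio_hasDerivAt_eq_ratio_slope
    (fun t => t/6*(U 2 t + 5*U 2 0) + t^2/12*U 3 t - U 1 t)
    (fun t => 5/6*(U 2 0 - U 2 t) + t/3*U 3 t + t^2/12*U 4 t) ht₁.1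
    (cN1.mono (Set.Icc_subset_Icc le_rfl ht₁.2.le))
    (fun t ht => dN1 t ⟨ht.1, ht.2.trans ht₁.2⟩)
    (fun t => 6*t^5) (fun t => 30*t^4)
    ((continuous_const.mul (continuous_pow 5)).continuousOn) (fun t _ => dP5 t)
  have ht₂h : t₂ < h := ht₂.2.trans ht₁.2
  obtain ⟨t₃, ht₃, e₃⟩ := exists_ratio_hasDerivAt_eq_ratio_slope
    (fun t => 5/6*(U 2 0 - U 2 t) + t/3*U 3 t + t^2/12*U 4 t)
    (fun t => -(1/2)*U 3 t + t/2*U 4 t + t^2/12*U 5 t) ht₂.1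
    (cN2.mono (Set.Icc_subset_Icc le_rfl ht₂h.le))
    (fun t ht => dN2 t ⟨ht.1, ht.2.trans ht₂h⟩)
    (fun t => 30*t^4) (fun t => 120*t^3)
    ((continuous_const.mul (continuous_pow 4)).continuousOn) (fun t _ => dP4 t)
  have ht₃h : t₃ < h := ht₃.2.trans ht₂h
  obtain ⟨t₄, ht₄, e₄⟩ := exists_ratio_hasDerivAt_eq_ratio_slope
    (fun t => -(1/2)*U 3 t + t/2*U 4 t + t^2/12*U 5 t)
    (fun t => 2/3*t*U 5 t + t^2/12*U 6 t) ht₃.1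
    (cN3.mono (Set.Icc_subset_Icc le_rfl ht₃h.le))
    (fun t ht => dN3 t ⟨ht.1, ht.2.trans ht₃h⟩)
    (fun t => 120*t^3) (fun t => 360*t^2)
    ((continuous_const.mul (continuous_pow 3)).continuousOn) (fun t _ => dP3 t)
  have ht₄h : t₄ < h := ht₄.2.trans ht₃h
  obtain ⟨s, hs, e₅⟩ := exists_ratio_hasDerivAt_eq_ratio_slope
    (U 5) (U 6) ht₄.1
    ((hUc 5 (by norm_num)).mono (Set.Icc_subset_Icc (by linarith) ht₄h.le))
    (fun t ht => hUd 5 (by norm_num) t ⟨by linarith [ht.1], ht.2.trans ht₄h⟩)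
    (fun t => t) (fun _ => 1) continuous_id.continuousOn (fun t _ => hasDerivAt_id t)
  have hsh : s < h := hs.2.trans ht₄h
  clear_value I G U
  -- chain the Cauchy MVT identities
  have c1 : h^6 * (t₁/6*(U 2 t₁ + 5*U 2 0) + t₁^2/12*U 3 t₁ - U 1 t₁)
      = (h^2/12*(U 2 h + 5*U 2 0) - (U 0 h - U 0 0)) * (6*t₁^5) := by
    linear_combination e₁
  have c2 : h^6 * (5/6*(U 2 0 - U 2 t₂) + t₂/3*U 3 t₂ + t₂^2/12*U 4 t₂)
      = (h^2/12*(U 2 h + 5*U 2 0) - (U 0 h - U 0 0)) * (30*t₂^4) := by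
    apply mul_left_cancel₀ (mul_pos (by norm_num : (0:ℝ)<6) (pow_pos ht₁.1 5)).ne'
    linear_combination (30*t₂^4) * c1 + h^6 * e₂ + h^6*(30*t₂^4) * hU10
  have c3 : h^6 * (-(1/2)*U 3 t₃ + t₃/2*U 4 t₃ + t₃^2/12*U 5 t₃)
      = (h^2/12*(U 2 h + 5*U 2 0) - (U 0 h - U 0 0)) * (120*t₃^3) := by
    apply mul_left_cancel₀ (mul_pos (by norm_num : (0:ℝ)<30) (pow_pos ht₂.1 4)).ne'
    linear_combination (120*t₃^3) * c2 + h^6 * e₃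
  have c4 : h^6 * (2/3*t₄*U 5 t₄ + t₄^2/12*U 6 t₄)
      = (h^2/12*(U 2 h + 5*U 2 0) - (U 0 h - U 0 0)) * (360*t₄^2) := by
    apply mul_left_cancel₀ (mul_pos (by norm_num : (0:ℝ)<120) (pow_pos ht₃.1 3)).ne'
    linear_combination (360*t₄^2) * c3 + h^6 * e₄ + h^6*(360*t₄^2)*(1/2) * hU30
  have c5 : U 5 t₄ = t₄ * U 6 s := by
    linear_combination -e₅ + hU50
  have final : 4320 * (h^2/12*(U 2 h + 5*U 2 0) - (U 0 h - U 0 0))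
      = h^6 * (8*U 6 s + U 6 t₄) := by
    apply mul_left_cancel₀ (pow_pos ht₄.1 2).ne'
    linear_combination -12 * c4 + 8*h^6*t₄ * c5
  -- first intermediate value step: θ with U 6 θ = (8 U6 s + U6 t₄)/9
  have cU6 : ContinuousOn (U 6) (Set.uIcc s t₄) := by
    apply (hUc 6 le_rfl).mono
    intro t ht
    rcases Set.mem_uIcc.mp ht with ⟨a,b⟩|⟨a,b⟩ <;>
      exact ⟨by linarith [hs.1, ht₄.1], by linarith [hsh, ht₄h]⟩
  have hv : (8*U 6 s + U 6 t₄)/9 ∈ Set.uIcc (U 6 s) (U 6 t₄) := by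
    rcases le_total (U 6 s) (U 6 t₄) with hc | hc
    · rw [Set.uIcc_of_le hc]; exact ⟨by linarith, by linarith⟩
    · rw [Set.uIcc_of_ge hc]; exact ⟨by linarith, by linarith⟩
  obtain ⟨θ, hθmem, hθ⟩ := intermediate_value_uIcc cU6 hv
  have hθ0 : 0 < θ := by
    rcases Set.mem_uIcc.mp hθmem with ⟨a,b⟩|⟨a,b⟩ <;> linarith [hs.1, ht₄.1]
  have hθh : θ < h := by
    rcases Set.mem_uIcc.mp hθmem with ⟨a,b⟩|⟨a,b⟩ <;> linarith [hsh, ht₄h]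
  -- second intermediate value step: ω with G 6 ω = U 6 θ / 2
  have cG6 : ContinuousOn (G 6) (Set.uIcc (x-θ) (x+θ)) := by
    apply (hGc 6 le_rfl).mono
    rw [Set.uIcc_of_le (by linarith : x-θ ≤ x+θ), hIdef]
    exact Set.Icc_subset_Icc (by linarith) (by linarith)
  have hUθ : U 6 θ = G 6 (x+θ) + G 6 (x-θ) := by
    simp only [hUdef]; norm_num
  have hw : U 6 θ / 2 ∈ Set.uIcc (G 6 (x-θ)) (G 6 (x+θ)) := by
    rcases le_total (G 6 (x-θ)) (G 6 (x+θ)) with hc | hc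
    · rw [Set.uIcc_of_le hc]; exact ⟨by linarith, by linarith⟩
    · rw [Set.uIcc_of_ge hc]; exact ⟨by linarith, by linarith⟩
  obtain ⟨ω, hωmem, hω⟩ := intermediate_value_uIcc cG6 hw
  rw [Set.uIcc_of_le (by linarith : x-θ ≤ x+θ)] at hωmem
  refine ⟨ω, ⟨by linarith [hωmem.1], by linarith [hωmem.2]⟩, ?_⟩
  -- final computation
  have key : h^2/12*(U 2 h + 5*U 2 0) - (U 0 h - U 0 0) = h^6/240 * G 6 ω := by
    linear_combination final/4320 - (h^6/240)*hω - (h^6/480)*hθ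
  have hU0h : U 0 h = g (x+h) + g (x-h) := by
    simp [hUdef, hGdef]
  have hU00 : U 0 0 = 2 * g x := by
    simp only [hUdef, hGdef, add_zero, sub_zero, iteratedDerivWithin_zero, pow_zero, one_mul]
    ring
  have hU2h : U 2 h = iteratedDerivWithin 2 g I (x+h) + iteratedDerivWithin 2 g I (x-h) := by
    simp only [hUdef, hGdef]; norm_num
  have hU20 : U 2 0 = 2 * iteratedDerivWithin 2 g I x := by
    simp only [hUdef, hGdef, add_zero, sub_zero]; ring
  have hG6ω : G 6 ω = iteratedDerivWithin 6 g I ω := by rw [hGdef]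
  have hne : (h:ℝ) ≠ 0 := ne_of_gt hh
  field_simp
  linear_combination 2880*key - 240*h^2*hU2h - 1200*h^2*hU20 + 2880*hU0h - 2880*hU00 + 12*h^6*hG6ω
end

section
/- If u is five times continuously differentiable on [x-2h, x+2h] with h > 0, then |u'(x) − (1/(12h))·[8·u(x+h) − 8·u(x-h) + u(x-2h) − u(x+2h)]| ≤ (h⁴/18)·sup_{s ∈ [x-2h, x+2h]} |u⁽⁵⁾(s)|. -/
open Set
open scoped Nat

private theorem iter_eq_of_subset' {f : ℝ → ℝ} {s t : Set ℝ} {n : WithTop ℕ∞} {k : ℕ}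
    (hf : ContDiffOn ℝ n f s) (hst : t ⊆ s) (hs : UniqueDiffOn ℝ s) (ht : UniqueDiffOn ℝ t)
    (hk : (k : WithTop ℕ∞) ≤ n) {y : ℝ} (hy : y ∈ t) :
    iteratedDerivWithin k f t y = iteratedDerivWithin k f s y := by
  have H := (hf.ftaylorSeriesWithin hs).mono hst
  have h1 := H.eq_iteratedFDerivWithin_of_uniqueDiffOn hk ht hy
  rw [iteratedDerivWithin_eq_iteratedFDerivWithin, iteratedDerivWithin_eq_iteratedFDerivWithin,
    ← h1]
  rfl

private theorem est_right' {u : ℝ → ℝ} {s : Set ℝ} {x y M : ℝ} (hxy : x < y)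
    (hs : UniqueDiffOn ℝ s) (hsub : Icc x y ⊆ s) (hu : ContDiffOn ℝ 5 u s)
    (hM : ∀ ξ ∈ s, |iteratedDerivWithin 5 u s ξ| ≤ M) :
    |u y - ∑ k ∈ Finset.range 5, ((k ! : ℝ)⁻¹ * (y - x) ^ k) * iteratedDerivWithin k u s x|
      ≤ M * |y - x| ^ 5 / 120 := by
  have hsm : UniqueDiffOn ℝ (Icc x y) := uniqueDiffOn_Icc hxy
  have hf : ContDiffOn ℝ 4 u (Icc x y) := (hu.mono hsub).of_le (by norm_num)
  have hde : ∀ z ∈ Icc x y, iteratedDerivWithin 4 u (Icc x y) z = iteratedDerivWithin 4 u s z :=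
    fun z hz => iter_eq_of_subset' hu hsub hs hsm (by norm_num) hz
  have hd : DifferentiableOn ℝ (iteratedDerivWithin 4 u s) s :=
    hu.differentiableOn_iteratedDerivWithin (by norm_num) hs
  have hf' : DifferentiableOn ℝ (iteratedDerivWithin 4 u (Icc x y)) (Ioo x y) := by
    intro z hz
    exact (((hd.mono hsub) z (Ioo_subset_Icc_self hz)).mono Ioo_subset_Icc_self).congr
      (fun w hw => hde w (Ioo_subset_Icc_self hw)) (hde z (Ioo_subset_Icc_self hz))
  obtain ⟨ξ, hξ, hT⟩ := taylor_mean_remainder_lagrange (n := 4) hxy.ne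
    (by rwa [uIcc_of_le hxy.le]) (by rwa [uIcc_of_le hxy.le, uIoo_of_le hxy.le])
  rw [uIcc_of_le hxy.le] at hT
  rw [uIoo_of_le hxy.le] at hξ
  rw [taylor_within_apply] at hT
  have hxm : x ∈ Icc x y := left_mem_Icc.mpr hxy.le
  have hsum : ∑ k ∈ Finset.range 5, ((k ! : ℝ)⁻¹ * (y - x) ^ k) •
        iteratedDerivWithin k u (Icc x y) x
      = ∑ k ∈ Finset.range 5, ((k ! : ℝ)⁻¹ * (y - x) ^ k) * iteratedDerivWithin k u s x := by
    refine Finset.sum_congr rfl fun k hk => ?_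
    rw [smul_eq_mul,
      iter_eq_of_subset' hu hsub hs hsm (by exact_mod_cast (Finset.mem_range.mp hk).le) hxm]
  rw [hsum] at hT
  rw [hT, iter_eq_of_subset' hu hsub hs hsm (by norm_num) (Ioo_subset_Icc_self hξ)]
  have h1 : |iteratedDerivWithin 5 u s ξ| ≤ M := hM ξ (hsub (Ioo_subset_Icc_self hξ))
  have h2 : |iteratedDerivWithin 5 u s ξ * (y - x) ^ (4 + 1) / (4 + 1)!|
      = |iteratedDerivWithin 5 u s ξ| * |y - x| ^ 5 / 120 := by
    rw [abs_div, abs_mul, abs_pow]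
    norm_num [Nat.factorial]
  rw [h2]
  gcongr

private theorem taylor_lagrange_left' {f : ℝ → ℝ} {x x₀ : ℝ} {n : ℕ} (hx : x < x₀)
    (hf : ContDiffOn ℝ n f (Icc x x₀))
    (hf' : DifferentiableOn ℝ (iteratedDerivWithin n f (Icc x x₀)) (Ioo x x₀)) :
    ∃ x' ∈ Ioo x x₀, f x - taylorWithinEval f n (Icc x x₀) x₀ x =
      iteratedDerivWithin (n + 1) f (Icc x x₀) x' * (x - x₀) ^ (n + 1) / (n + 1)! := by
  have gcont : ContinuousOn (fun t : ℝ => (x - t) ^ (n + 1)) (Icc x x₀) := by fun_prop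
  have xy_ne : ∀ y ∈ Ioo x x₀, (x - y) ^ n ≠ 0 := fun y hy =>
    pow_ne_zero _ (sub_ne_zero.mpr hy.1.ne)
  rcases exists_ratio_hasDerivAt_eq_ratio_slope
      (fun t => taylorWithinEval f n (Icc x x₀) t x)
      (fun t => ((n ! : ℝ)⁻¹ * (x - t) ^ n) • iteratedDerivWithin (n + 1) f (Icc x x₀) t) hx
      (continuousOn_taylorWithinEval (uniqueDiffOn_Icc hx) hf)
      (fun t ht => taylorWithinEval_hasDerivAt_Ioo x hx ht hf hf')
      (fun t : ℝ => (x - t) ^ (n + 1)) (fun t => (-(n + 1) : ℝ) * (x - t) ^ n)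
      gcont (fun y _ => monomial_has_deriv_aux y x _) with ⟨y, hy, h⟩
  use y, hy
  simp only [taylorWithinEval_self, sub_self, zero_pow (Nat.succ_ne_zero n), sub_zero,
    smul_eq_mul] at h
  have hfac : (n ! : ℝ) ≠ 0 := Nat.cast_ne_zero.mpr n.factorial_ne_zero
  have hfac' : ((n + 1)! : ℝ) ≠ 0 := Nat.cast_ne_zero.mpr (n + 1).factorial_ne_zero
  have hne : (x - y) ^ n ≠ 0 := xy_ne y hy
  field_simp at h
  rw [eq_div_iff hfac']
  apply mul_right_cancel₀ hne
  push_cast [Nat.factorial_succ]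
  linear_combination -(x - y) ^ n * h

private theorem est_left' {u : ℝ → ℝ} {s : Set ℝ} {x y M : ℝ} (hxy : y < x)
    (hs : UniqueDiffOn ℝ s) (hsub : Icc y x ⊆ s) (hu : ContDiffOn ℝ 5 u s)
    (hM : ∀ ξ ∈ s, |iteratedDerivWithin 5 u s ξ| ≤ M) :
    |u y - ∑ k ∈ Finset.range 5, ((k ! : ℝ)⁻¹ * (y - x) ^ k) * iteratedDerivWithin k u s x|
      ≤ M * |y - x| ^ 5 / 120 := by
  have hsm : UniqueDiffOn ℝ (Icc y x) := uniqueDiffOn_Icc hxy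
  have hf : ContDiffOn ℝ 4 u (Icc y x) := (hu.mono hsub).of_le (by norm_num)
  have hde : ∀ z ∈ Icc y x, iteratedDerivWithin 4 u (Icc y x) z = iteratedDerivWithin 4 u s z :=
    fun z hz => iter_eq_of_subset' hu hsub hs hsm (by norm_num) hz
  have hd : DifferentiableOn ℝ (iteratedDerivWithin 4 u s) s :=
    hu.differentiableOn_iteratedDerivWithin (by norm_num) hs
  have hf' : DifferentiableOn ℝ (iteratedDerivWithin 4 u (Icc y x)) (Ioo y x) := by
    intro z hz
    exact (((hd.mono hsub) z (Ioo_subset_Icc_self hz)).mono Ioo_subset_Icc_self).congr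
      (fun w hw => hde w (Ioo_subset_Icc_self hw)) (hde z (Ioo_subset_Icc_self hz))
  obtain ⟨ξ, hξ, hT⟩ := taylor_lagrange_left' (n := 4) hxy hf hf'
  rw [taylor_within_apply] at hT
  have hxm : x ∈ Icc y x := right_mem_Icc.mpr hxy.le
  have hsum : ∑ k ∈ Finset.range 5, ((k ! : ℝ)⁻¹ * (y - x) ^ k) •
        iteratedDerivWithin k u (Icc y x) x
      = ∑ k ∈ Finset.range 5, ((k ! : ℝ)⁻¹ * (y - x) ^ k) * iteratedDerivWithin k u s x := by
    refine Finset.sum_congr rfl fun k hk => ?_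
    rw [smul_eq_mul,
      iter_eq_of_subset' hu hsub hs hsm (by exact_mod_cast (Finset.mem_range.mp hk).le) hxm]
  rw [hsum] at hT
  rw [hT, iter_eq_of_subset' hu hsub hs hsm (by norm_num) (Ioo_subset_Icc_self hξ)]
  have h1 : |iteratedDerivWithin 5 u s ξ| ≤ M := hM ξ (hsub (Ioo_subset_Icc_self hξ))
  have h2 : |iteratedDerivWithin 5 u s ξ * (y - x) ^ (4 + 1) / (4 + 1)!|
      = |iteratedDerivWithin 5 u s ξ| * |y - x| ^ 5 / 120 := by
    rw [abs_div, abs_mul, abs_pow]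
    norm_num [Nat.factorial]
  rw [h2]
  gcongr

/-- The collocation-polynomial numerical gradient formula
P = (1/(12h))·[8u(x+h) − 8u(x−h) + u(x−2h) − u(x+2h)]
is fourth-order accurate for the first derivative. -/
theorem numerical_gradient_fourth_order
    (u : ℝ → ℝ) (x h : ℝ) (hh : 0 < h)
    (hu : ContDiffOn ℝ 5 u (Set.Icc (x - 2 * h) (x + 2 * h))) :
    |derivWithin u (Set.Icc (x - 2 * h) (x + 2 * h)) x
        - (1 / (12 * h)) * (8 * u (x + h) - 8 * u (x - h)
            + u (x - 2 * h) - u (x + 2 * h))|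
      ≤ (h ^ 4 / 18) * ⨆ s ∈ Set.Icc (x - 2 * h) (x + 2 * h),
          |iteratedDerivWithin 5 u (Set.Icc (x - 2 * h) (x + 2 * h)) s| := by
  set s : Set ℝ := Set.Icc (x - 2 * h) (x + 2 * h) with hsdef
  have hlt : x - 2 * h < x + 2 * h := by linarith
  have hs : UniqueDiffOn ℝ s := uniqueDiffOn_Icc hlt
  have hxs : x ∈ s := ⟨by linarith, by linarith⟩
  have hcont : ContinuousOn (iteratedDerivWithin 5 u s) s :=
    hu.continuousOn_iteratedDerivWithin le_rfl hs
  obtain ⟨C, hC⟩ := (isCompact_Icc (a := x - 2 * h) (b := x + 2 * h)).exists_bound_of_continuousOn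
    hcont
  set M : ℝ := ⨆ z ∈ s, |iteratedDerivWithin 5 u s z| with hMdef
  have hbdd : BddAbove (Set.range fun z => ⨆ _ : z ∈ s, |iteratedDerivWithin 5 u s z|) := by
    refine ⟨max C 0, ?_⟩
    rintro _ ⟨z, rfl⟩
    show ⨆ _ : z ∈ s, |iteratedDerivWithin 5 u s z| ≤ max C 0
    by_cases hz : z ∈ s
    · haveI : Nonempty (z ∈ s) := ⟨hz⟩
      rw [ciSup_const]
      exact le_max_of_le_left (by simpa [Real.norm_eq_abs] using hC z hz)
    · haveI : IsEmpty (z ∈ s) := ⟨hz⟩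
      rw [iSup_of_empty', Real.sSup_empty]
      exact le_max_right _ _
  have hM : ∀ ξ ∈ s, |iteratedDerivWithin 5 u s ξ| ≤ M := by
    intro ξ hξ
    haveI : Nonempty (ξ ∈ s) := ⟨hξ⟩
    have := le_ciSup hbdd ξ
    rwa [ciSup_const] at this
  have hM0 : 0 ≤ M := (abs_nonneg _).trans (hM x hxs)
  have e1 := est_right' (show x < x + h by linarith) hs
    (Icc_subset_Icc (by linarith) (by linarith)) hu hM
  have e2 := est_left' (show x - h < x by linarith) hs
    (Icc_subset_Icc (by linarith) (by linarith)) hu hM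
  have e3 := est_left' (show x - 2 * h < x by linarith) hs
    (Icc_subset_Icc (by linarith) (by linarith)) hu hM
  have e4 := est_right' (show x < x + 2 * h by linarith) hs
    (Icc_subset_Icc (by linarith) (by linarith)) hu hM
  rw [show |x + h - x| = h by rw [show x + h - x = h by ring]; exact abs_of_pos hh] at e1
  rw [show |x - h - x| = h by rw [show x - h - x = -h by ring, abs_neg]; exact abs_of_pos hh] at e2
  rw [show |x - 2 * h - x| = 2 * h by
    rw [show x - 2 * h - x = -(2 * h) by ring, abs_neg]; exact abs_of_pos (by linarith)] at e3
  rw [show |x + 2 * h - x| = 2 * h by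
    rw [show x + 2 * h - x = 2 * h by ring]; exact abs_of_pos (by linarith)] at e4
  set A1 := u (x + h) - ∑ k ∈ Finset.range 5,
    ((k ! : ℝ)⁻¹ * (x + h - x) ^ k) * iteratedDerivWithin k u s x with hA1
  set A2 := u (x - h) - ∑ k ∈ Finset.range 5,
    ((k ! : ℝ)⁻¹ * (x - h - x) ^ k) * iteratedDerivWithin k u s x with hA2
  set A3 := u (x - 2 * h) - ∑ k ∈ Finset.range 5,
    ((k ! : ℝ)⁻¹ * (x - 2 * h - x) ^ k) * iteratedDerivWithin k u s x with hA3
  set A4 := u (x + 2 * h) - ∑ k ∈ Finset.range 5,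
    ((k ! : ℝ)⁻¹ * (x + 2 * h - x) ^ k) * iteratedDerivWithin k u s x with hA4
  have hd1 : derivWithin u s x = iteratedDerivWithin 1 u s x :=
    (congrFun iteratedDerivWithin_one x).symm
  have key : derivWithin u s x - 1 / (12 * h) * (8 * u (x + h) - 8 * u (x - h)
      + u (x - 2 * h) - u (x + 2 * h))
      = -(1 / (12 * h)) * (8 * A1 - 8 * A2 + A3 - A4) := by
    rw [hd1, hA1, hA2, hA3, hA4]
    simp only [Finset.sum_range_succ, Finset.sum_range_zero]
    norm_num [Nat.factorial]
    field_simp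
    ring
  rw [key, abs_mul, abs_neg, abs_of_pos (show (0:ℝ) < 1 / (12 * h) by positivity)]
  have hXbound : |8 * A1 - 8 * A2 + A3 - A4| ≤ 8 * |A1| + 8 * |A2| + |A3| + |A4| := by
    calc |8 * A1 - 8 * A2 + A3 - A4| ≤ |8 * A1 - 8 * A2 + A3| + |A4| := abs_sub _ _
      _ ≤ |8 * A1 - 8 * A2| + |A3| + |A4| := by
          have := abs_add_le (8 * A1 - 8 * A2) A3; linarith
      _ ≤ |8 * A1| + |8 * A2| + |A3| + |A4| := by
          have := abs_sub (8 * A1) (8 * A2); linarith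
      _ = 8 * |A1| + 8 * |A2| + |A3| + |A4| := by
          rw [abs_mul, abs_mul]; norm_num
  have hfinal : 1 / (12 * h) * (8 * (M * h ^ 5 / 120) + 8 * (M * h ^ 5 / 120)
      + M * (2 * h) ^ 5 / 120 + M * (2 * h) ^ 5 / 120) = h ^ 4 / 18 * M := by
    field_simp
    ring
  calc 1 / (12 * h) * |8 * A1 - 8 * A2 + A3 - A4|
      ≤ 1 / (12 * h) * (8 * (M * h ^ 5 / 120) + 8 * (M * h ^ 5 / 120)
        + M * (2 * h) ^ 5 / 120 + M * (2 * h) ^ 5 / 120) := by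
        have h12 : (0:ℝ) ≤ 1 / (12 * h) := by positivity
        apply mul_le_mul_of_nonneg_left _ h12
        linarith [hXbound, e1, e2, e3, e4]
    _ = h ^ 4 / 18 * M := hfinal
end

section
/- If u is four times continuously differentiable on [x-h, x+2h] with h > 0, then |u'(x) − (1/(6h))·[−2·u(x-h) − 3·u(x) + 6·u(x+h) − u(x+2h)]| ≤ (h³/6)·sup_{s ∈ [x-h, x+2h]} |u⁗(s)|. -/
open Set Nat

lemma taylor_sharp_bound {f : ℝ → ℝ} {a b C x₀ x : ℝ} {n : ℕ} (hab : a < b)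
    (hf : ContDiffOn ℝ (n + 1) f (Set.Icc a b)) (hx₀ : x₀ ∈ Set.Icc a b)
    (hx : x ∈ Set.Icc a b)
    (hC : ∀ y ∈ Set.Icc a b, |iteratedDerivWithin (n + 1) f (Set.Icc a b) y| ≤ C) :
    |f x - taylorWithinEval f n (Set.Icc a b) x₀ x| ≤
      C * |x - x₀| ^ (n + 1) / (n + 1)! := by
  have hC0 : 0 ≤ C := le_trans (abs_nonneg _) (hC a ⟨le_rfl, hab.le⟩)
  have hf' : DifferentiableOn ℝ (iteratedDerivWithin n f (Icc a b)) (Icc a b) :=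
    hf.differentiableOn_iteratedDerivWithin (by exact_mod_cast n.lt_succ_self)
      (uniqueDiffOn_Icc hab)
  set D : ℝ → ℝ := iteratedDerivWithin (n + 1) f (Icc a b) with hD
  have A : ∀ t ∈ Icc a b, HasDerivWithinAt (fun y => taylorWithinEval f n (Icc a b) y x)
      (((n ! : ℝ)⁻¹ * (x - t) ^ n) • D t) (Icc a b) t := fun t ht =>
    hasDerivWithinAt_taylorWithinEval_at_Icc x hab ht hf.of_succ hf'
  have hcont : ContinuousOn (fun y => taylorWithinEval f n (Icc a b) y x) (Icc a b) :=
    fun t ht => (A t ht).continuousWithinAt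
  have hfac : ((n + 1)! : ℝ) = (n + 1) * n ! := by
    push_cast [Nat.factorial_succ]; ring
  have hfacpos : (0:ℝ) < n ! := by positivity
  rcases le_or_gt x₀ x with hle | hlt
  · rcases eq_or_lt_of_le hle with rfl | hlt'
    · simp [taylorWithinEval_self]
    · -- x₀ < x : work on [x₀, x]
      set g : ℝ → ℝ := fun t => taylorWithinEval f n (Icc a b) t x
        - taylorWithinEval f n (Icc a b) x₀ x with hg
      set B : ℝ → ℝ := fun t =>
        C / (n + 1)! * ((x - x₀) ^ (n + 1) - (x - t) ^ (n + 1)) with hBdef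
      have hB : ∀ t, HasDerivAt B (C / n ! * (x - t) ^ n) t := by
        intro t
        have h1 : HasDerivAt (fun y : ℝ => (x - y) ^ (n + 1))
            ((n + 1) * (x - t) ^ n * (-1)) t := by
          simpa using (((hasDerivAt_id t).const_sub x).fun_pow (n + 1))
        have h2 := (h1.const_sub ((x - x₀) ^ (n + 1))).const_mul (C / (n + 1)!)
        refine h2.congr_deriv ?_
        rw [hfac]; field_simp
      have hsub : Icc x₀ x ⊆ Icc a b := Icc_subset_Icc hx₀.1 hx.2
      have hgd : ∀ t ∈ Ico x₀ x, HasDerivWithinAt g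
          (((n ! : ℝ)⁻¹ * (x - t) ^ n) • D t) (Ici t) t := by
        intro t ht
        have := ((A t (hsub ⟨ht.1, ht.2.le⟩)).sub_const
          (taylorWithinEval f n (Icc a b) x₀ x))
        exact this.mono_of_mem_nhdsWithin
          (Icc_mem_nhdsGE_of_mem ⟨hx₀.1.trans ht.1, ht.2.trans_le hx.2⟩)
      have bound : ∀ t ∈ Ico x₀ x, ‖((n ! : ℝ)⁻¹ * (x - t) ^ n) • D t‖ ≤
          C / n ! * (x - t) ^ n := by
        intro t ht
        have hxt : 0 ≤ x - t := sub_nonneg.2 ht.2.le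
        rw [smul_eq_mul, Real.norm_eq_abs, abs_mul, abs_mul, abs_inv,
          abs_pow, abs_of_nonneg hxt, Nat.abs_cast,
          show C / (n ! : ℝ) * (x - t) ^ n = (n ! : ℝ)⁻¹ * (x - t) ^ n * C from by ring]
        exact mul_le_mul_of_nonneg_left (hC t (hsub ⟨ht.1, ht.2.le⟩)) (by positivity)
      have key := image_norm_le_of_norm_deriv_right_le_deriv_boundary
        ((hcont.mono hsub).fun_sub continuousOn_const) hgd
        (by simp [hg, hBdef]) hB bound (right_mem_Icc.2 hle)
      simp only [taylorWithinEval_self] at key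
      rw [Real.norm_eq_abs] at key
      calc |f x - taylorWithinEval f n (Icc a b) x₀ x| ≤
          C / (n + 1)! * ((x - x₀) ^ (n + 1) - (x - x) ^ (n + 1)) := key
        _ = C * |x - x₀| ^ (n + 1) / (n + 1)! := by
            rw [abs_of_nonneg (sub_nonneg.2 hle)]
            have : (0:ℝ) < n + 1 := by positivity
            rw [sub_self, zero_pow (Nat.succ_ne_zero n)]
            ring
  · -- x < x₀ : work on [x, x₀]
    set g : ℝ → ℝ := fun t => taylorWithinEval f n (Icc a b) t x - f x with hg
    set B : ℝ → ℝ := fun t => C / (n + 1)! * (t - x) ^ (n + 1) with hBdef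
    have hB : ∀ t, HasDerivAt B (C / n ! * (t - x) ^ n) t := by
      intro t
      have h1 : HasDerivAt (fun y : ℝ => (y - x) ^ (n + 1))
          ((n + 1) * (t - x) ^ n * 1) t := by
        simpa using (((hasDerivAt_id t).sub_const x).fun_pow (n + 1))
      have h2 := h1.const_mul (C / (n + 1)!)
      refine h2.congr_deriv ?_
      rw [hfac]; field_simp
    have hsub : Icc x x₀ ⊆ Icc a b := Icc_subset_Icc hx.1 hx₀.2
    have hgd : ∀ t ∈ Ico x x₀, HasDerivWithinAt g
        (((n ! : ℝ)⁻¹ * (x - t) ^ n) • D t) (Ici t) t := by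
      intro t ht
      have := ((A t (hsub ⟨ht.1, ht.2.le⟩)).sub_const (f x))
      exact this.mono_of_mem_nhdsWithin
        (Icc_mem_nhdsGE_of_mem ⟨hx.1.trans ht.1, ht.2.trans_le hx₀.2⟩)
    have bound : ∀ t ∈ Ico x x₀, ‖((n ! : ℝ)⁻¹ * (x - t) ^ n) • D t‖ ≤
        C / n ! * (t - x) ^ n := by
      intro t ht
      have hxt : 0 ≤ t - x := sub_nonneg.2 ht.1
      have habs : |x - t| = t - x := by rw [abs_sub_comm, abs_of_nonneg hxt]
      rw [smul_eq_mul, Real.norm_eq_abs, abs_mul, abs_mul, abs_inv,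
        abs_pow, Nat.abs_cast, habs,
        show C / (n ! : ℝ) * (t - x) ^ n = (n ! : ℝ)⁻¹ * (t - x) ^ n * C from by ring]
      exact mul_le_mul_of_nonneg_left (hC t (hsub ⟨ht.1, ht.2.le⟩)) (by positivity)
    have key := image_norm_le_of_norm_deriv_right_le_deriv_boundary
      ((hcont.mono hsub).fun_sub continuousOn_const) hgd
      (by simp [hg, hBdef, taylorWithinEval_self]) hB bound
      (right_mem_Icc.2 hlt.le)
    rw [Real.norm_eq_abs, abs_sub_comm] at key
    calc |f x - taylorWithinEval f n (Icc a b) x₀ x| ≤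
        C / (n + 1)! * (x₀ - x) ^ (n + 1) := key
      _ = C * |x - x₀| ^ (n + 1) / (n + 1)! := by
          rw [abs_sub_comm, abs_of_nonneg (sub_nonneg.2 hlt.le)]
          ring

/-- The near-boundary collocation-polynomial gradient formula
P₁ = (1/(6h))·[−2u(x−h) − 3u(x) + 6u(x+h) − u(x+2h)]
is third-order accurate for the first derivative. -/
theorem boundary_numerical_gradient_third_order
    (u : ℝ → ℝ) (x h : ℝ) (hh : 0 < h)
    (hu : ContDiffOn ℝ 4 u (Set.Icc (x - h) (x + 2 * h))) :
    |derivWithin u (Set.Icc (x - h) (x + 2 * h)) x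
        - (1 / (6 * h)) * (-2 * u (x - h) - 3 * u x + 6 * u (x + h) - u (x + 2 * h))|
      ≤ (h ^ 3 / 6) * ⨆ s ∈ Set.Icc (x - h) (x + 2 * h),
          |iteratedDerivWithin 4 u (Set.Icc (x - h) (x + 2 * h)) s| := by
  set I := Set.Icc (x - h) (x + 2 * h) with hIdef
  have hab : x - h < x + 2 * h := by linarith
  have hxI : x ∈ I := ⟨by linarith, by linarith⟩
  have hI1 : x - h ∈ I := ⟨le_rfl, by linarith⟩
  have hI2 : x + h ∈ I := ⟨by linarith, by linarith⟩
  have hI3 : x + 2 * h ∈ I := ⟨by linarith, le_rfl⟩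
  set F : ℝ → ℝ := fun s => |iteratedDerivWithin 4 u I s| with hFdef
  set M : ℝ := ⨆ s ∈ I, F s with hMdef
  -- boundedness of the 4th derivative
  have hcont : ContinuousOn (iteratedDerivWithin 4 u I) I :=
    hu.continuousOn_iteratedDerivWithin (by norm_num) (uniqueDiffOn_Icc hab)
  obtain ⟨C0, hC0⟩ := (isCompact_Icc (a := x - h) (b := x + 2 * h)).exists_bound_of_continuousOn hcont
  have hbdd : BddAbove (Set.range fun s => ⨆ _ : s ∈ I, F s) := by
    refine ⟨max C0 0, ?_⟩
    rintro _ ⟨s, rfl⟩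
    by_cases hs : s ∈ I
    · calc (⨆ _ : s ∈ I, F s) = F s := ciSup_pos hs
        _ ≤ max C0 0 := le_max_of_le_left (by simpa [hFdef] using hC0 s hs)
    · haveI : IsEmpty (s ∈ I) := ⟨hs⟩
      calc (⨆ _ : s ∈ I, F s) = 0 := Real.iSup_of_isEmpty _
        _ ≤ max C0 0 := le_max_right _ _
  have hM : ∀ y ∈ I, F y ≤ M := by
    intro y hy
    rw [hMdef]
    calc F y = ⨆ _ : y ∈ I, F y := (ciSup_pos (f := fun _ : y ∈ I => F y) hy).symm
      _ ≤ ⨆ s ∈ I, F s := le_ciSup hbdd y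
  have hM' : ∀ y ∈ I, |iteratedDerivWithin (3 + 1) u I y| ≤ M := fun y hy => hM y hy
  have hM0 : 0 ≤ M := le_trans (abs_nonneg _) (hM x hxI)
  have hu' : ContDiffOn ℝ ((3 : ℕ) + 1) u I := by exact_mod_cast hu
  -- sharp Taylor bounds at the three points
  have hE1 := taylor_sharp_bound hab hu' hxI hI1 hM'
  have hE2 := taylor_sharp_bound hab hu' hxI hI2 hM'
  have hE3 := taylor_sharp_bound hab hu' hxI hI3 hM'
  rw [show |x - h - x| = h by rw [show x - h - x = -h by ring, abs_neg, abs_of_pos hh]] at hE1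
  rw [show |x + h - x| = h by rw [show x + h - x = h by ring, abs_of_pos hh]] at hE2
  rw [show |x + 2 * h - x| = 2 * h by
    rw [show x + 2 * h - x = 2 * h by ring, abs_of_pos (by linarith)]] at hE3
  rw [show (((3 + 1)! : ℕ) : ℝ) = 24 from by norm_num [Nat.factorial]] at hE1 hE2 hE3
  rw [show (2 * h) ^ (3 + 1) = 16 * h ^ (3 + 1) from by ring] at hE3
  -- expansion of the Taylor polynomial
  set d2 := iteratedDerivWithin 2 u I x with hd2
  set d3 := iteratedDerivWithin 3 u I x with hd3
  have hT : ∀ y : ℝ, taylorWithinEval u 3 I x y =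
      u x + derivWithin u I x * (y - x) + d2 / 2 * (y - x) ^ 2 + d3 / 6 * (y - x) ^ 3 := by
    intro y
    rw [taylor_within_apply]
    have h1 : iteratedDerivWithin 1 u I x = derivWithin u I x :=
      by rw [iteratedDerivWithin_one]
    simp [Finset.sum_range_succ, iteratedDerivWithin_zero, h1, Nat.factorial]
    ring
  set e1 := u (x - h) - taylorWithinEval u 3 I x (x - h) with he1
  set e2 := u (x + h) - taylorWithinEval u 3 I x (x + h) with he2
  set e3 := u (x + 2 * h) - taylorWithinEval u 3 I x (x + 2 * h) with he3
  have hrw : derivWithin u I x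
      - 1 / (6 * h) * (-2 * u (x - h) - 3 * u x + 6 * u (x + h) - u (x + 2 * h))
      = -(1 / (6 * h)) * (-2 * e1 + 6 * e2 - e3) := by
    rw [he1, he2, he3, hT, hT, hT]
    field_simp
    ring
  rw [hrw]
  have hS : |(-2 * e1 + 6 * e2 - e3)| ≤ M * h ^ 4 := by
    have t1 := abs_add_le (-2 * e1 + 6 * e2) (-e3)
    rw [abs_neg] at t1
    have t2 : |(-2 : ℝ) * e1 + 6 * e2| ≤ 2 * |e1| + 6 * |e2| := by
      calc |(-2 : ℝ) * e1 + 6 * e2| ≤ |(-2 : ℝ) * e1| + |(6 : ℝ) * e2| := abs_add_le _ _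
        _ = 2 * |e1| + 6 * |e2| := by rw [abs_mul, abs_mul]; norm_num
    have hsum : -2 * e1 + 6 * e2 - e3 = (-2 * e1 + 6 * e2) + -e3 := by ring
    rw [hsum]
    have p4 : (3 + 1 : ℕ) = 4 := rfl
    rw [p4] at hE1 hE2 hE3
    linarith [hE1, hE2, hE3]
  rw [abs_mul, abs_neg, abs_of_pos (show (0:ℝ) < 1 / (6 * h) by positivity)]
  calc 1 / (6 * h) * |(-2 * e1 + 6 * e2 - e3)| ≤ 1 / (6 * h) * (M * h ^ 4) := by
        gcongr
    _ = h ^ 3 / 6 * M := by field_simp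
end

section
/- Let u be four times continuously differentiable on [a, a+h] with h > 0, and let P, Q be real numbers with |P − u'(a)| ≤ ε and |Q − u'(a+h)| ≤ ε for some ε ≥ 0. Then the refined intermediate value û = (1/2)·(u(a) + u(a+h)) + (h/8)·(P − Q) satisfies |u(a + h/2) − û| ≤ (h⁴/384)·sup_{s ∈ [a, a+h]} |u⁗(s)| + (h/4)·ε. -/
open Set intervalIntegral

lemma hermite_mid_exact (u : ℝ → ℝ) (a h : ℝ) (hh : 0 < h)
    (hu : ContDiffOn ℝ 4 u (Set.Icc a (a + h))) (M : ℝ)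
    (hM : ∀ x ∈ Set.Icc a (a + h), |iteratedDerivWithin 4 u (Set.Icc a (a + h)) x| ≤ M) :
    |u (a + h / 2) - ((1 / 2) * (u a + u (a + h))
        + (h / 8) * (derivWithin u (Set.Icc a (a + h)) a
            - derivWithin u (Set.Icc a (a + h)) (a + h)))|
      ≤ h ^ 4 / 384 * M := by
  have hab : a < a + h := by linarith
  set I : Set ℝ := Set.Icc a (a + h) with hI_def
  have hsu : UniqueDiffOn ℝ I := uniqueDiffOn_Icc hab
  set w : ℕ → ℝ → ℝ := fun k => iteratedDerivWithin k u I with hw_def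
  have hw0 : w 0 = u := iteratedDerivWithin_zero
  have hM0 : 0 ≤ M := le_trans (abs_nonneg _) (hM a ⟨le_rfl, le_of_lt hab⟩)
  set T : ℝ := h / 2 with hT_def
  set m : ℝ := a + h / 2 with hm_def
  have hT0 : 0 ≤ T := by positivity
  have hmem : ∀ t ∈ Set.Icc (0:ℝ) T, m - t ∈ I ∧ m + t ∈ I := by
    intro t ht
    obtain ⟨h1, h2⟩ := ht
    constructor <;> constructor <;> simp only [hm_def, hT_def] at * <;> linarith
  have hmemo : ∀ t ∈ Set.Ioo (0:ℝ) T, m - t ∈ Set.Ioo a (a + h) ∧ m + t ∈ Set.Ioo a (a + h) := by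
    intro t ht
    obtain ⟨h1, h2⟩ := ht
    constructor <;> constructor <;> simp only [hm_def, hT_def] at * <;> linarith
  -- derivatives of the iterated derivatives at interior points
  have key : ∀ k : ℕ, k < 4 → ∀ x ∈ Set.Ioo a (a + h), HasDerivAt (w k) (w (k + 1) x) x := by
    intro k hk x hx
    have hxs : x ∈ I := Set.Ioo_subset_Icc_self hx
    have hd : DifferentiableWithinAt ℝ (w k) I x :=
      hu.differentiableOn_iteratedDerivWithin (by exact_mod_cast hk) hsu x hxs
    have h1 : HasDerivWithinAt (w k) (derivWithin (w k) I x) I x := hd.hasDerivWithinAt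
    have h2 : derivWithin (w k) I x = w (k + 1) x := (congrFun iteratedDerivWithin_succ x).symm
    rw [h2] at h1
    exact h1.hasDerivAt (Icc_mem_nhds hx.1 hx.2)
  have key3 : ∀ x ∈ I, HasDerivWithinAt (w 3) (w 4 x) I x := by
    intro x hx
    have hd : DifferentiableWithinAt ℝ (w 3) I x :=
      hu.differentiableOn_iteratedDerivWithin (by exact_mod_cast (by norm_num : (3:ℕ) < 4)) hsu x hx
    have h1 := hd.hasDerivWithinAt
    have h2 : derivWithin (w 3) I x = w 4 x := (congrFun iteratedDerivWithin_succ x).symm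
    rwa [h2] at h1
  have hlip : ∀ x ∈ I, ∀ y ∈ I, |w 3 y - w 3 x| ≤ M * |y - x| := by
    intro x hx y hy
    have := (convex_Icc a (a + h)).norm_image_sub_le_of_norm_hasDerivWithin_le key3
      (fun z hz => by simpa [Real.norm_eq_abs] using hM z hz) hx hy
    simpa [Real.norm_eq_abs] using this
  have hw1 : ∀ x ∈ I, w 1 x = derivWithin u I x := fun x hx => congrFun iteratedDerivWithin_one x
  -- continuity of the iterated derivatives
  have wcont : ∀ k : ℕ, k ≤ 4 → ContinuousOn (w k) I := by
    intro k hk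
    exact hu.continuousOn_iteratedDerivWithin (by exact_mod_cast hk) hsu
  set F : ℝ → ℝ := fun t => u m - (u (m - t) + u (m + t)) / 2
      - t / 4 * (w 1 (m - t) - w 1 (m + t)) with hF_def
  set G : ℝ → ℝ := fun t => (w 1 (m - t) - w 1 (m + t)) / 4
      + t / 4 * (w 2 (m - t) + w 2 (m + t)) with hG_def
  set G' : ℝ → ℝ := fun t => t / 4 * (w 3 (m + t) - w 3 (m - t)) with hG'_def
  have hmapsP : Set.MapsTo (fun t : ℝ => m + t) (Set.Icc 0 T) I := fun t ht => (hmem t ht).2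
  have hmapsM : Set.MapsTo (fun t : ℝ => m - t) (Set.Icc 0 T) I := fun t ht => (hmem t ht).1
  have cP : Continuous fun t : ℝ => m + t := continuous_const.add continuous_id
  have cM : Continuous fun t : ℝ => m - t := continuous_const.sub continuous_id
  have compP : ∀ k : ℕ, k ≤ 4 → ContinuousOn (fun t => w k (m + t)) (Set.Icc 0 T) :=
    fun k hk => (wcont k hk).comp cP.continuousOn hmapsP
  have compM : ∀ k : ℕ, k ≤ 4 → ContinuousOn (fun t => w k (m - t)) (Set.Icc 0 T) :=
    fun k hk => (wcont k hk).comp cM.continuousOn hmapsM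
  have hucont : ContinuousOn u I := hu.continuousOn
  have compPu : ContinuousOn (fun t => u (m + t)) (Set.Icc 0 T) :=
    hucont.comp cP.continuousOn hmapsP
  have compMu : ContinuousOn (fun t => u (m - t)) (Set.Icc 0 T) :=
    hucont.comp cM.continuousOn hmapsM
  have hFcont : ContinuousOn F (Set.Icc 0 T) := by
    apply ContinuousOn.sub
    · exact (continuousOn_const).sub ((compMu.add compPu).div_const 2)
    · exact ((continuousOn_id.div_const 4)).mul ((compM 1 (by norm_num)).sub (compP 1 (by norm_num)))
  have hGcont : ContinuousOn G (Set.Icc 0 T) := by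
    apply ContinuousOn.add
    · exact ((compM 1 (by norm_num)).sub (compP 1 (by norm_num))).div_const 4
    · exact ((continuousOn_id.div_const 4)).mul ((compM 2 (by norm_num)).add (compP 2 (by norm_num)))
  have hG'cont : ContinuousOn G' (Set.Icc 0 T) := by
    exact ((continuousOn_id.div_const 4)).mul ((compP 3 (by norm_num)).sub (compM 3 (by norm_num)))
  -- derivative of F
  have hFderiv : ∀ t ∈ Set.Ioo (0:ℝ) T, HasDerivAt F (G t) t := by
    intro t ht
    obtain ⟨hms, hps⟩ := hmemo t ht
    have hmP : HasDerivAt (fun t : ℝ => m + t) 1 t := (hasDerivAt_id t).const_add m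
    have hmM : HasDerivAt (fun t : ℝ => m - t) (-1) t := by
      simpa using (hasDerivAt_id t).const_sub m
    have hB : HasDerivAt (fun t : ℝ => u (m + t)) (w 1 (m + t)) t := by
      have h0 : HasDerivAt (w 0) (w 1 (m + t)) (m + t) := key 0 (by norm_num) _ hps
      rw [hw0] at h0
      simpa [Function.comp_def] using h0.comp t hmP
    have hA : HasDerivAt (fun t : ℝ => u (m - t)) (-(w 1 (m - t))) t := by
      have h0 : HasDerivAt (w 0) (w 1 (m - t)) (m - t) := key 0 (by norm_num) _ hms
      rw [hw0] at h0
      have := h0.comp t hmM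
      simpa [mul_comm, Function.comp_def] using this
    have hD : HasDerivAt (fun t : ℝ => w 1 (m + t)) (w 2 (m + t)) t := by
      simpa [Function.comp_def] using (key 1 (by norm_num) _ hps).comp t hmP
    have hC : HasDerivAt (fun t : ℝ => w 1 (m - t)) (-(w 2 (m - t))) t := by
      simpa [mul_comm, Function.comp_def] using (key 1 (by norm_num) _ hms).comp t hmM
    have hid : HasDerivAt (fun t : ℝ => t / 4) (1 / 4) t := by
      simpa using (hasDerivAt_id t).div_const 4
    have := ((hasDerivAt_const t (u m)).sub ((hA.add hB).div_const 2)).sub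
      (hid.mul (hC.sub hD))
    convert this using 1
    · rfl
    · rfl
    · rfl
    simp only [hG_def, Pi.sub_apply, Pi.add_apply]
    ring
  -- derivative of G
  have hGderiv : ∀ t ∈ Set.Ioo (0:ℝ) T, HasDerivAt G (G' t) t := by
    intro t ht
    obtain ⟨hms, hps⟩ := hmemo t ht
    have hmP : HasDerivAt (fun t : ℝ => m + t) 1 t := (hasDerivAt_id t).const_add m
    have hmM : HasDerivAt (fun t : ℝ => m - t) (-1) t := by
      simpa using (hasDerivAt_id t).const_sub m
    have hD : HasDerivAt (fun t : ℝ => w 1 (m + t)) (w 2 (m + t)) t := by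
      simpa [Function.comp_def] using (key 1 (by norm_num) _ hps).comp t hmP
    have hC : HasDerivAt (fun t : ℝ => w 1 (m - t)) (-(w 2 (m - t))) t := by
      simpa [mul_comm, Function.comp_def] using (key 1 (by norm_num) _ hms).comp t hmM
    have hE : HasDerivAt (fun t : ℝ => w 2 (m - t)) (-(w 3 (m - t))) t := by
      simpa [mul_comm, Function.comp_def] using (key 2 (by norm_num) _ hms).comp t hmM
    have hH : HasDerivAt (fun t : ℝ => w 2 (m + t)) (w 3 (m + t)) t := by
      simpa [Function.comp_def] using (key 2 (by norm_num) _ hps).comp t hmP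
    have hid : HasDerivAt (fun t : ℝ => t / 4) (1 / 4) t := by
      simpa using (hasDerivAt_id t).div_const 4
    have := (((hC.sub hD)).div_const 4).add (hid.mul (hE.add hH))
    convert this using 1
    · rfl
    · rfl
    · rfl
    simp only [hG'_def, Pi.sub_apply, Pi.add_apply]
    ring
  -- bound on G'
  have hG'bd : ∀ t ∈ Set.Icc (0:ℝ) T, |G' t| ≤ M / 2 * t ^ 2 := by
    intro t ht
    obtain ⟨hms, hps⟩ := hmem t ht
    have h3 : |w 3 (m + t) - w 3 (m - t)| ≤ M * |(m + t) - (m - t)| := hlip _ hms _ hps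
    have habs : |(m + t) - (m - t)| = 2 * t := by
      rw [show (m + t) - (m - t) = 2 * t by ring, abs_of_nonneg (by linarith [ht.1])]
    rw [habs] at h3
    have : |G' t| = t / 4 * |w 3 (m + t) - w 3 (m - t)| := by
      rw [hG'_def]
      simp only []
      rw [abs_mul, abs_of_nonneg (by linarith [ht.1] : (0:ℝ) ≤ t / 4)]
    rw [this]
    nlinarith [ht.1, abs_nonneg (w 3 (m + t) - w 3 (m - t))]
  -- bound on G via FTC
  have hG0 : G 0 = 0 := by simp [hG_def]
  have hGbd : ∀ t ∈ Set.Icc (0:ℝ) T, |G t| ≤ M / 6 * t ^ 3 := by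
    intro t ht
    have hsub : Set.Icc (0:ℝ) t ⊆ Set.Icc 0 T := Set.Icc_subset_Icc le_rfl ht.2
    have hftc : ∫ r in (0:ℝ)..t, G' r = G t - G 0 := by
      apply intervalIntegral.integral_eq_sub_of_hasDeriv_right_of_le ht.1
        (hGcont.mono hsub)
        (fun x hx => (hGderiv x ⟨hx.1, lt_of_lt_of_le hx.2 ht.2⟩).hasDerivWithinAt)
      exact (hG'cont.mono hsub).intervalIntegrable_of_Icc ht.1
    rw [hG0, sub_zero] at hftc
    rw [← hftc]
    calc |∫ r in (0:ℝ)..t, G' r| ≤ ∫ r in (0:ℝ)..t, |G' r| :=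
          intervalIntegral.abs_integral_le_integral_abs ht.1
      _ ≤ ∫ r in (0:ℝ)..t, M / 2 * r ^ 2 := by
          apply intervalIntegral.integral_mono_on ht.1
          · exact ((hG'cont.mono hsub).abs).intervalIntegrable_of_Icc ht.1
          · exact (Continuous.intervalIntegrable (continuous_const.mul (continuous_pow 2)) 0 t)
          · intro r hr
            exact hG'bd r ⟨hr.1, le_trans hr.2 ht.2⟩
      _ = M / 6 * t ^ 3 := by
          rw [intervalIntegral.integral_const_mul, integral_pow]
          ring
  -- bound on F via FTC
  have hF0 : F 0 = 0 := by
    simp only [hF_def, sub_zero, add_zero, zero_div, zero_mul]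
    ring
  have hFbd : |F T| ≤ M / 24 * T ^ 4 := by
    have hftc : ∫ r in (0:ℝ)..T, G r = F T - F 0 := by
      apply intervalIntegral.integral_eq_sub_of_hasDeriv_right_of_le hT0 hFcont
        (fun x hx => (hFderiv x hx).hasDerivWithinAt)
      exact hGcont.intervalIntegrable_of_Icc hT0
    rw [hF0, sub_zero] at hftc
    rw [← hftc]
    calc |∫ r in (0:ℝ)..T, G r| ≤ ∫ r in (0:ℝ)..T, |G r| :=
          intervalIntegral.abs_integral_le_integral_abs hT0
      _ ≤ ∫ r in (0:ℝ)..T, M / 6 * r ^ 3 := by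
          apply intervalIntegral.integral_mono_on hT0
          · exact (hGcont.abs).intervalIntegrable_of_Icc hT0
          · exact (Continuous.intervalIntegrable (continuous_const.mul (continuous_pow 3)) 0 T)
          · intro r hr
            exact hGbd r hr
      _ = M / 24 * T ^ 4 := by
          rw [intervalIntegral.integral_const_mul, integral_pow]
          ring
  -- conclude
  have hma : m - T = a := by rw [hm_def, hT_def]; ring
  have hmb : m + T = a + h := by rw [hm_def, hT_def]; ring
  have haI : a ∈ I := ⟨le_rfl, le_of_lt hab⟩
  have hbI : a + h ∈ I := ⟨le_of_lt hab, le_rfl⟩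
  have hFT : F T = u (a + h / 2) - ((1 / 2) * (u a + u (a + h))
      + (h / 8) * (derivWithin u I a - derivWithin u I (a + h))) := by
    rw [hF_def]
    simp only [hma, hmb, hw1 a haI, hw1 (a + h) hbI]
    rw [hm_def, hT_def]
    ring
  rw [← hFT] at *
  calc |F T| ≤ M / 24 * T ^ 4 := hFbd
    _ = h ^ 4 / 384 * M := by rw [hT_def]; ring

/-- Midpoint refinement with approximate endpoint derivatives: if `P` and `Q`
approximate `u'(a)` and `u'(a+h)` within `ε`, the refined intermediate value
û = (1/2)(u(a)+u(a+h)) + (h/8)(P − Q) approximates `u(a + h/2)` with the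
Hermite interpolation error plus `(h/4)·ε`. -/
theorem refined_midpoint_error
    (u : ℝ → ℝ) (a h : ℝ) (hh : 0 < h)
    (hu : ContDiffOn ℝ 4 u (Set.Icc a (a + h)))
    (P Q ε : ℝ) (hε : 0 ≤ ε)
    (hP : |P - derivWithin u (Set.Icc a (a + h)) a| ≤ ε)
    (hQ : |Q - derivWithin u (Set.Icc a (a + h)) (a + h)| ≤ ε) :
    |u (a + h / 2) - ((1 / 2) * (u a + u (a + h)) + (h / 8) * (P - Q))|
      ≤ (h ^ 4 / 384) * (⨆ s ∈ Set.Icc a (a + h),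
          |iteratedDerivWithin 4 u (Set.Icc a (a + h)) s|) + (h / 4) * ε := by
  have hab : a < a + h := by linarith
  set M : ℝ := ⨆ s ∈ Set.Icc a (a + h), |iteratedDerivWithin 4 u (Set.Icc a (a + h)) s| with hM_def
  have hsu : UniqueDiffOn ℝ (Set.Icc a (a + h)) := uniqueDiffOn_Icc hab
  have hMb : ∀ x ∈ Set.Icc a (a + h), |iteratedDerivWithin 4 u (Set.Icc a (a + h)) x| ≤ M := by
    obtain ⟨C, hC⟩ := (isCompact_Icc.image_of_continuousOn
      ((hu.continuousOn_iteratedDerivWithin (by exact_mod_cast le_rfl) hsu).abs)).bddAbove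
    have hb : ∀ y : ℝ, (⨆ _ : y ∈ Set.Icc a (a + h),
        |iteratedDerivWithin 4 u (Set.Icc a (a + h)) y|) ≤ max C 0 := by
      intro y
      by_cases hy : y ∈ Set.Icc a (a + h)
      · rw [ciSup_pos hy]
        exact le_max_of_le_left (hC ⟨y, hy, rfl⟩)
      · rw [ciSup_neg hy, Real.sSup_empty]
        exact le_max_right _ _
    intro x hx
    rw [hM_def]
    calc |iteratedDerivWithin 4 u (Set.Icc a (a + h)) x|
        = ⨆ _ : x ∈ Set.Icc a (a + h), |iteratedDerivWithin 4 u (Set.Icc a (a + h)) x| :=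
          (ciSup_pos (f := fun _ => |iteratedDerivWithin 4 u (Set.Icc a (a + h)) x|) hx).symm
      _ ≤ ⨆ y ∈ Set.Icc a (a + h), |iteratedDerivWithin 4 u (Set.Icc a (a + h)) y| :=
          le_ciSup ⟨max C 0, by rintro _ ⟨y, rfl⟩; exact hb y⟩ x
  have hkey := hermite_mid_exact u a h hh hu M hMb
  set D1 := derivWithin u (Set.Icc a (a + h)) a
  set D2 := derivWithin u (Set.Icc a (a + h)) (a + h)
  have hsplit : u (a + h / 2) - ((1 / 2) * (u a + u (a + h)) + (h / 8) * (P - Q))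
      = (u (a + h / 2) - ((1 / 2) * (u a + u (a + h)) + (h / 8) * (D1 - D2)))
        - (h / 8) * ((P - D1) - (Q - D2)) := by ring
  rw [hsplit]
  calc |_ - (h / 8) * ((P - D1) - (Q - D2))|
      ≤ |u (a + h / 2) - ((1 / 2) * (u a + u (a + h)) + (h / 8) * (D1 - D2))|
        + |(h / 8) * ((P - D1) - (Q - D2))| := abs_sub _ _
    _ ≤ h ^ 4 / 384 * M + (h / 8) * (|P - D1| + |Q - D2|) := by
        apply add_le_add hkey
        rw [abs_mul, abs_of_nonneg (by positivity : (0:ℝ) ≤ h / 8)]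
        exact mul_le_mul_of_nonneg_left (abs_sub _ _) (by positivity)
    _ ≤ (h ^ 4 / 384) * M + (h / 4) * ε := by nlinarith
end

section
/- If u is five times continuously differentiable on [a-2h, a+3h] with h > 0, then the explicit six-point midpoint formula satisfies |u(a + h/2) − (1/96)·[u(a-2h) − 9·u(a-h) + 56·u(a) + 56·u(a+h) − 9·u(a+2h) + u(a+3h)]| ≤ (h⁴/384)·sup_{s ∈ [a-2h, a+3h]} |u⁗(s)| + (h⁵/72)·sup_{s ∈ [a-2h, a+3h]} |u⁽⁵⁾(s)|. -/
open Set

/-- If `f 0 = 0` and `|f'| ≤ C t^k` on `(0,T)`, then `|f T| ≤ C T^(k+1) / (k+1)`. -/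
lemma sixpt_grow (f f' : ℝ → ℝ) (C : ℝ) (k : ℕ) (T : ℝ) (hT : 0 ≤ T)
    (hc : ContinuousOn f (Icc 0 T))
    (hd : ∀ t ∈ Ioo (0:ℝ) T, HasDerivAt f (f' t) t)
    (hb : ∀ t ∈ Ioo (0:ℝ) T, |f' t| ≤ C * t ^ k)
    (h0 : f 0 = 0) : |f T| ≤ C * T ^ (k + 1) / (k + 1) := by
  rcases eq_or_lt_of_le hT with rfl | hT'
  · rw [h0, abs_zero]
    simp
  have hCpos : 0 ≤ C := by
    rcases (exists_between hT') with ⟨t, ht0, htT⟩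
    have := (abs_nonneg (f' t)).trans (hb t ⟨ht0, htT⟩)
    nlinarith [pow_pos ht0 k]
  have key : ∀ ε : ℝ, ε = 1 ∨ ε = -1 → ε * f T ≤ C * T ^ (k + 1) / (k + 1) := by
    intro ε hε
    set g : ℝ → ℝ := fun t => C / (k + 1) * t ^ (k + 1) - ε * f t with hg
    have hmono : MonotoneOn g (Icc 0 T) := by
      apply monotoneOn_of_deriv_nonneg (convex_Icc 0 T)
      · exact (continuousOn_const.mul (continuousOn_pow _)).sub (continuousOn_const.mul hc)
      · intro t ht
        rw [interior_Icc] at ht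
        have hder : HasDerivAt g (C / (k + 1) * ((k + 1 : ℕ) * t ^ (k + 1 - 1)) - ε * f' t) t :=
          ((hasDerivAt_pow (k+1) t).const_mul _).sub ((hd t ht).const_mul ε)
        exact hder.differentiableAt.differentiableWithinAt
      · intro t ht
        rw [interior_Icc] at ht
        have hder : HasDerivAt g (C / (k + 1) * ((k + 1 : ℕ) * t ^ (k + 1 - 1)) - ε * f' t) t :=
          ((hasDerivAt_pow (k+1) t).const_mul _).sub ((hd t ht).const_mul ε)
        rw [hder.deriv]
        have h1 : C / (k + 1) * ((k + 1 : ℕ) * t ^ (k + 1 - 1)) = C * t ^ k := by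
          push_cast
          have hk : (k:ℝ) + 1 ≠ 0 := by positivity
          field_simp
        have h2 : ε * f' t ≤ |f' t| := by
          rcases hε with rfl | rfl
          · simpa using le_abs_self (f' t)
          · simpa using neg_le_abs (f' t)
        linarith [hb t ht]
    have := hmono (left_mem_Icc.2 hT) (right_mem_Icc.2 hT) hT
    simp only [hg, h0] at this
    have hz : C / (↑k + 1) * (0:ℝ) ^ (k + 1) - ε * 0 = 0 := by simp
    rw [hz] at this
    have : ε * f T ≤ C / (k + 1) * T ^ (k + 1) := by linarith
    calc ε * f T ≤ C / (k + 1) * T ^ (k + 1) := this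
      _ = C * T ^ (k + 1) / (k + 1) := by ring
  rcases abs_cases (f T) with ⟨he, _⟩ | ⟨he, _⟩
  · rw [he]; simpa using key 1 (Or.inl rfl)
  · rw [he]; simpa [neg_mul] using key (-1) (Or.inr rfl)

/-- Helper: derivative of `s ↦ w (b + c s)`. -/
lemma sixpt_shift {w w' : ℝ → ℝ} {S : Set ℝ} (hw : ∀ x ∈ S, HasDerivAt w (w' x) x)
    (b c t : ℝ) (hm : b + c * t ∈ S) :
    HasDerivAt (fun s => w (b + c * s)) (c * w' (b + c * t)) t := by
  have h := (hw _ hm).comp t (((hasDerivAt_id t).const_mul c).const_add b)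
  simpa [Function.comp_def, mul_comm] using h

/-- Error of the cubic Hermite midpoint formula. -/
lemma sixpt_hermite (v v1 v2 v3 : ℝ → ℝ) (m r M : ℝ) (hr : 0 < r)
    (hd0 : ∀ x ∈ Icc (m - r) (m + r), HasDerivAt v (v1 x) x)
    (hd1 : ∀ x ∈ Icc (m - r) (m + r), HasDerivAt v1 (v2 x) x)
    (hd2 : ∀ x ∈ Icc (m - r) (m + r), HasDerivAt v2 (v3 x) x)
    (hlip : ∀ x ∈ Icc (m - r) (m + r), ∀ y ∈ Icc (m - r) (m + r),
      |v3 x - v3 y| ≤ M * |x - y|) :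
    |v m - ((v (m - r) + v (m + r)) / 2 + r / 4 * (v1 (m - r) - v1 (m + r)))|
      ≤ M * r ^ 4 / 24 := by
  have hM : 0 ≤ M := by
    have h1 := hlip m (by constructor <;> linarith) (m + r) (by constructor <;> linarith)
    have h2 := abs_nonneg (v3 m - v3 (m + r))
    have h3 : |m - (m + r)| = r := by
      rw [abs_sub_comm, show m + r - m = r by ring]
      exact abs_of_pos hr
    nlinarith
  -- memberships
  have hmem : ∀ c t : ℝ, |c| ≤ 1 → t ∈ Icc (0:ℝ) r → m + c * t ∈ Icc (m - r) (m + r) := by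
    intro c t hc ht
    obtain ⟨h1, h2⟩ := abs_le.1 hc
    obtain ⟨ht1, ht2⟩ := ht
    constructor <;> nlinarith
  -- χ and its derivative
  have hχ : ∀ t ∈ Icc (0:ℝ) r,
      HasDerivAt (fun s => s * (v2 (m + 1 * s) + v2 (m + (-1) * s))
          - (v1 (m + 1 * s) - v1 (m + (-1) * s)))
        (t * (v3 (m + 1 * t) - v3 (m + (-1) * t))) t := by
    intro t ht
    have p2 := sixpt_shift hd2 m 1 t (hmem 1 t (by norm_num) ht)
    have n2 := sixpt_shift hd2 m (-1) t (hmem (-1) t (by norm_num) ht)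
    have p1 := sixpt_shift hd1 m 1 t (hmem 1 t (by norm_num) ht)
    have n1 := sixpt_shift hd1 m (-1) t (hmem (-1) t (by norm_num) ht)
    have H := ((hasDerivAt_id t).mul (p2.add n2)).sub (p1.sub n1)
    refine H.congr_deriv ?_
    simp only [id_eq, Pi.add_apply, Pi.sub_apply]
    ring
  -- bound on χ
  have hχb : ∀ t ∈ Icc (0:ℝ) r,
      |(fun s => s * (v2 (m + 1 * s) + v2 (m + (-1) * s))
          - (v1 (m + 1 * s) - v1 (m + (-1) * s))) t| ≤ 2 * M * t ^ 3 / 3 := by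
    intro t ht
    have := sixpt_grow _ _ (2 * M) 2 t ht.1
      (fun s hs => ((hχ s (⟨hs.1, hs.2.trans ht.2⟩ : s ∈ Icc 0 r)).continuousAt).continuousWithinAt)
      (fun s hs => hχ s ⟨le_of_lt hs.1, hs.2.le.trans ht.2⟩)
      (fun s hs => by
        have hlb := hlip (m + 1 * s) (hmem 1 s (by norm_num) ⟨hs.1.le, hs.2.le.trans ht.2⟩)
          (m + (-1) * s) (hmem (-1) s (by norm_num) ⟨hs.1.le, hs.2.le.trans ht.2⟩)
        have harg : |m + 1 * s - (m + (-1) * s)| = 2 * s := by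
          rw [show m + 1 * s - (m + (-1) * s) = 2 * s by ring]
          exact abs_of_nonneg (by linarith [hs.1.le])
        rw [abs_mul, abs_of_nonneg hs.1.le]
        calc s * |v3 (m + 1 * s) - v3 (m + (-1) * s)| ≤ s * (M * (2 * s)) := by
              rw [harg] at hlb
              exact mul_le_mul_of_nonneg_left hlb hs.1.le
          _ = 2 * M * s ^ 2 := by ring)
      (by simp)
    calc _ ≤ 2 * M * t ^ (2 + 1) / ((2:ℕ) + 1 : ℝ) := this
      _ = 2 * M * t ^ 3 / 3 := by norm_num
  -- φ and its derivative
  have hφ : ∀ t ∈ Icc (0:ℝ) r,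
      HasDerivAt (fun s => v m - ((v (m + (-1) * s) + v (m + 1 * s)) / 2
          + s / 4 * (v1 (m + (-1) * s) - v1 (m + 1 * s))))
        ((t * (v2 (m + 1 * t) + v2 (m + (-1) * t)) - (v1 (m + 1 * t) - v1 (m + (-1) * t))) / 4)
        t := by
    intro t ht
    have p0 := sixpt_shift hd0 m 1 t (hmem 1 t (by norm_num) ht)
    have n0 := sixpt_shift hd0 m (-1) t (hmem (-1) t (by norm_num) ht)
    have p1 := sixpt_shift hd1 m 1 t (hmem 1 t (by norm_num) ht)
    have n1 := sixpt_shift hd1 m (-1) t (hmem (-1) t (by norm_num) ht)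
    have H := ((((n0.add p0).div_const 2).add
      (((hasDerivAt_id t).div_const 4).mul (n1.sub p1))).const_sub (v m))
    refine H.congr_deriv ?_
    simp only [id_eq, Pi.add_apply, Pi.sub_apply]
    ring
  -- final bound on φ at r
  have hfin := sixpt_grow _ _ (M / 6) 3 r hr.le
    (fun s hs => ((hφ s hs).continuousAt).continuousWithinAt)
    (fun s hs => hφ s ⟨hs.1.le, hs.2.le⟩)
    (fun s hs => by
      have h1 := hχb s ⟨hs.1.le, hs.2.le⟩
      have h2 : |(s * (v2 (m + 1 * s) + v2 (m + (-1) * s))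
          - (v1 (m + 1 * s) - v1 (m + (-1) * s))) / 4|
          ≤ (2 * M * s ^ 3 / 3) / 4 := by
        rw [abs_div, show |(4:ℝ)| = 4 by norm_num]
        linarith
      calc _ ≤ (2 * M * s ^ 3 / 3) / 4 := h2
        _ = M / 6 * s ^ 3 := by ring)
    (by simp)
  have heq : m + (-1) * r = m - r := by ring
  have heq2 : m + 1 * r = m + r := by ring
  rw [heq, heq2] at hfin
  calc _ ≤ M / 6 * r ^ (3 + 1) / ((3:ℕ) + 1 : ℝ) := hfin
    _ = M * r ^ 4 / 24 := by norm_num; ring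

/-- Error of the 4-point central difference gradient, in cleared-denominator form. -/
lemma sixpt_grad (v v1 v2 v3 v4 : ℝ → ℝ) (b h M : ℝ) (hh : 0 < h)
    (hcont : ContinuousOn v (Icc (b - 2 * h) (b + 2 * h)))
    (hd0 : ∀ x ∈ Ioo (b - 2 * h) (b + 2 * h), HasDerivAt v (v1 x) x)
    (hd1 : ∀ x ∈ Ioo (b - 2 * h) (b + 2 * h), HasDerivAt v1 (v2 x) x)
    (hd2 : ∀ x ∈ Ioo (b - 2 * h) (b + 2 * h), HasDerivAt v2 (v3 x) x)
    (hd3 : ∀ x ∈ Ioo (b - 2 * h) (b + 2 * h), HasDerivAt v3 (v4 x) x)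
    (hlip : ∀ x ∈ Ioo (b - 2 * h) (b + 2 * h), ∀ y ∈ Ioo (b - 2 * h) (b + 2 * h),
      |v4 x - v4 y| ≤ M * |x - y|) :
    |12 * (h * v1 b)
        - (8 * v (b + 1 * h) - 8 * v (b + (-1) * h) + v (b + (-2) * h) - v (b + 2 * h))|
      ≤ 2 / 3 * M * h ^ 5 := by
  have hmemO : ∀ c t : ℝ, |c| ≤ 2 → 0 ≤ t → t < h → b + c * t ∈ Ioo (b - 2 * h) (b + 2 * h) := by
    intro c t hc h0 h1
    obtain ⟨hc1, hc2⟩ := abs_le.1 hc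
    constructor <;> nlinarith
  -- level 3 : derivative of G3 and bound
  have hdG3 : ∀ t : ℝ, 0 ≤ t → t < h →
      HasDerivAt (fun s => -(8 * v3 (b + 1 * s) + 8 * v3 (b + (-1) * s)
          - 8 * v3 (b + (-2) * s) - 8 * v3 (b + 2 * s)))
        (-(8 * (v4 (b + 1 * t) - v4 (b + (-1) * t))
          + 16 * (v4 (b + (-2) * t) - v4 (b + 2 * t)))) t := by
    intro t h0 h1
    have p1 := sixpt_shift hd3 b 1 t (hmemO 1 t (by norm_num) h0 h1)
    have n1 := sixpt_shift hd3 b (-1) t (hmemO (-1) t (by norm_num) h0 h1)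
    have n2 := sixpt_shift hd3 b (-2) t (hmemO (-2) t (by norm_num) h0 h1)
    have p2 := sixpt_shift hd3 b 2 t (hmemO 2 t (by norm_num) h0 h1)
    have H := ((((p1.const_mul 8).add (n1.const_mul 8)).sub
      (n2.const_mul 8)).sub (p2.const_mul 8)).neg
    refine H.congr_deriv ?_
    ring
  have hbG4 : ∀ t : ℝ, 0 < t → t < h →
      |(-(8 * (v4 (b + 1 * t) - v4 (b + (-1) * t))
          + 16 * (v4 (b + (-2) * t) - v4 (b + 2 * t))))| ≤ 80 * M * t := by
    intro t h0 h1
    have e1 := hlip (b + 1 * t) (hmemO 1 t (by norm_num) h0.le h1)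
      (b + (-1) * t) (hmemO (-1) t (by norm_num) h0.le h1)
    have e2 := hlip (b + (-2) * t) (hmemO (-2) t (by norm_num) h0.le h1)
      (b + 2 * t) (hmemO 2 t (by norm_num) h0.le h1)
    rw [show b + 1 * t - (b + (-1) * t) = 2 * t by ring] at e1
    rw [show b + (-2) * t - (b + 2 * t) = -(4 * t) by ring, abs_neg] at e2
    rw [abs_of_nonneg (by linarith : (0:ℝ) ≤ 2 * t)] at e1
    rw [abs_of_nonneg (by linarith : (0:ℝ) ≤ 4 * t)] at e2
    have hM : 0 ≤ M := by nlinarith [abs_nonneg (v4 (b + 1 * t) - v4 (b + (-1) * t))]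
    calc |(-(8 * (v4 (b + 1 * t) - v4 (b + (-1) * t))
          + 16 * (v4 (b + (-2) * t) - v4 (b + 2 * t))))|
        ≤ |8 * (v4 (b + 1 * t) - v4 (b + (-1) * t))|
          + |16 * (v4 (b + (-2) * t) - v4 (b + 2 * t))| := by
          rw [abs_neg]; exact abs_add_le _ _
      _ = 8 * |v4 (b + 1 * t) - v4 (b + (-1) * t)|
          + 16 * |v4 (b + (-2) * t) - v4 (b + 2 * t)| := by
          rw [abs_mul, abs_mul]; norm_num
      _ ≤ 8 * (M * (2 * t)) + 16 * (M * (4 * t)) := by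
          have := mul_le_mul_of_nonneg_left e1 (by norm_num : (0:ℝ) ≤ 8)
          have := mul_le_mul_of_nonneg_left e2 (by norm_num : (0:ℝ) ≤ 16)
          linarith
      _ = 80 * M * t := by ring
  -- level 3 value bound via grow
  have hG3 : ∀ t : ℝ, 0 ≤ t → t < h →
      |(-(8 * v3 (b + 1 * t) + 8 * v3 (b + (-1) * t)
          - 8 * v3 (b + (-2) * t) - 8 * v3 (b + 2 * t)))| ≤ 40 * M * t ^ 2 := by
    intro t h0 h1
    have := sixpt_grow _ _ (80 * M) 1 t h0
      (fun s hs => ((hdG3 s hs.1 (lt_of_le_of_lt hs.2 h1)).continuousAt).continuousWithinAt)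
      (fun s hs => hdG3 s hs.1.le (hs.2.trans h1))
      (fun s hs => by simpa using hbG4 s hs.1 (hs.2.trans h1))
      (by norm_num)
    calc _ ≤ 80 * M * t ^ (1 + 1) / ((1:ℕ) + 1 : ℝ) := this
      _ = 40 * M * t ^ 2 := by push_cast; ring
  -- level 2
  have hdG2 : ∀ t : ℝ, 0 ≤ t → t < h →
      HasDerivAt (fun s => -(8 * v2 (b + 1 * s) - 8 * v2 (b + (-1) * s)
          + 4 * v2 (b + (-2) * s) - 4 * v2 (b + 2 * s)))
        (-(8 * v3 (b + 1 * t) + 8 * v3 (b + (-1) * t)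
          - 8 * v3 (b + (-2) * t) - 8 * v3 (b + 2 * t))) t := by
    intro t h0 h1
    have p1 := sixpt_shift hd2 b 1 t (hmemO 1 t (by norm_num) h0 h1)
    have n1 := sixpt_shift hd2 b (-1) t (hmemO (-1) t (by norm_num) h0 h1)
    have n2 := sixpt_shift hd2 b (-2) t (hmemO (-2) t (by norm_num) h0 h1)
    have p2 := sixpt_shift hd2 b 2 t (hmemO 2 t (by norm_num) h0 h1)
    have H := ((((p1.const_mul 8).sub (n1.const_mul 8)).add
      (n2.const_mul 4)).sub (p2.const_mul 4)).neg
    refine H.congr_deriv ?_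
    ring
  have hG2 : ∀ t : ℝ, 0 ≤ t → t < h →
      |(-(8 * v2 (b + 1 * t) - 8 * v2 (b + (-1) * t)
          + 4 * v2 (b + (-2) * t) - 4 * v2 (b + 2 * t)))| ≤ 40 * M * t ^ 3 / 3 := by
    intro t h0 h1
    have := sixpt_grow _ _ (40 * M) 2 t h0
      (fun s hs => ((hdG2 s hs.1 (lt_of_le_of_lt hs.2 h1)).continuousAt).continuousWithinAt)
      (fun s hs => hdG2 s hs.1.le (hs.2.trans h1))
      (fun s hs => hG3 s hs.1.le (hs.2.trans h1))
      (by norm_num)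
    calc _ ≤ 40 * M * t ^ (2 + 1) / ((2:ℕ) + 1 : ℝ) := this
      _ = 40 * M * t ^ 3 / 3 := by push_cast; ring
  -- level 1
  have hdG1 : ∀ t : ℝ, 0 ≤ t → t < h →
      HasDerivAt (fun s => 12 * v1 b - (8 * v1 (b + 1 * s) + 8 * v1 (b + (-1) * s)
          - 2 * v1 (b + (-2) * s) - 2 * v1 (b + 2 * s)))
        (-(8 * v2 (b + 1 * t) - 8 * v2 (b + (-1) * t)
          + 4 * v2 (b + (-2) * t) - 4 * v2 (b + 2 * t))) t := by
    intro t h0 h1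
    have p1 := sixpt_shift hd1 b 1 t (hmemO 1 t (by norm_num) h0 h1)
    have n1 := sixpt_shift hd1 b (-1) t (hmemO (-1) t (by norm_num) h0 h1)
    have n2 := sixpt_shift hd1 b (-2) t (hmemO (-2) t (by norm_num) h0 h1)
    have p2 := sixpt_shift hd1 b 2 t (hmemO 2 t (by norm_num) h0 h1)
    have H := ((((p1.const_mul 8).add (n1.const_mul 8)).sub
      (n2.const_mul 2)).sub (p2.const_mul 2)).const_sub (12 * v1 b)
    refine H.congr_deriv ?_
    ring
  have hG1 : ∀ t : ℝ, 0 ≤ t → t < h →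
      |12 * v1 b - (8 * v1 (b + 1 * t) + 8 * v1 (b + (-1) * t)
          - 2 * v1 (b + (-2) * t) - 2 * v1 (b + 2 * t))| ≤ 10 / 3 * M * t ^ 4 := by
    intro t h0 h1
    have := sixpt_grow _ _ (40 * M / 3) 3 t h0
      (fun s hs => ((hdG1 s hs.1 (lt_of_le_of_lt hs.2 h1)).continuousAt).continuousWithinAt)
      (fun s hs => hdG1 s hs.1.le (hs.2.trans h1))
      (fun s hs => by
        have := hG2 s hs.1.le (hs.2.trans h1)
        calc _ ≤ 40 * M * s ^ 3 / 3 := this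
          _ = 40 * M / 3 * s ^ 3 := by ring)
      (by simp only [mul_zero, zero_mul, add_zero, sub_zero]; ring)
    calc _ ≤ 40 * M / 3 * t ^ (3 + 1) / ((3:ℕ) + 1 : ℝ) := this
      _ = 10 / 3 * M * t ^ 4 := by push_cast; ring
  -- level 0 : G itself, on the closed interval
  have hdG : ∀ t : ℝ, 0 ≤ t → t < h →
      HasDerivAt (fun s => 12 * (s * v1 b) - (8 * v (b + 1 * s) - 8 * v (b + (-1) * s)
          + v (b + (-2) * s) - v (b + 2 * s)))
        (12 * v1 b - (8 * v1 (b + 1 * t) + 8 * v1 (b + (-1) * t)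
          - 2 * v1 (b + (-2) * t) - 2 * v1 (b + 2 * t))) t := by
    intro t h0 h1
    have p1 := sixpt_shift hd0 b 1 t (hmemO 1 t (by norm_num) h0 h1)
    have n1 := sixpt_shift hd0 b (-1) t (hmemO (-1) t (by norm_num) h0 h1)
    have n2 := sixpt_shift hd0 b (-2) t (hmemO (-2) t (by norm_num) h0 h1)
    have p2 := sixpt_shift hd0 b 2 t (hmemO 2 t (by norm_num) h0 h1)
    have H := (((hasDerivAt_id t).mul_const (v1 b)).const_mul 12).sub
      ((((p1.const_mul 8).sub (n1.const_mul 8)).add n2).sub p2)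
    refine H.congr_deriv ?_
    ring
  have hcG : ContinuousOn (fun s => 12 * (s * v1 b) - (8 * v (b + 1 * s) - 8 * v (b + (-1) * s)
      + v (b + (-2) * s) - v (b + 2 * s))) (Icc 0 h) := by
    have cc : ∀ c : ℝ, |c| ≤ 2 → ContinuousOn (fun s : ℝ => v (b + c * s)) (Icc 0 h) := by
      intro c hc
      apply hcont.comp ((continuous_const.add (continuous_const.mul continuous_id)).continuousOn)
      intro t ht
      obtain ⟨hc1, hc2⟩ := abs_le.1 hc
      obtain ⟨ht1, ht2⟩ := ht
      constructor <;> simp <;> nlinarith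
    exact (continuousOn_const.mul (continuousOn_id.mul continuousOn_const)).sub
      ((((continuousOn_const.mul (cc 1 (by norm_num))).sub
        (continuousOn_const.mul (cc (-1) (by norm_num)))).add
        (cc (-2) (by norm_num))).sub (cc 2 (by norm_num)))
  have := sixpt_grow _ _ (10 / 3 * M) 4 h hh.le hcG
    (fun s hs => hdG s hs.1.le hs.2)
    (fun s hs => hG1 s hs.1.le hs.2)
    (by simp only [mul_zero, zero_mul, add_zero, sub_zero]; ring)
  calc _ ≤ 10 / 3 * M * h ^ (4 + 1) / ((4:ℕ) + 1 : ℝ) := this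
    _ = 2 / 3 * M * h ^ 5 := by push_cast; ring

lemma sixpt_le_biSup {f : ℝ → ℝ} {s : Set ℝ} (B : ℝ) (hB : ∀ x ∈ s, f x ≤ B)
    {x : ℝ} (hx : x ∈ s) : f x ≤ ⨆ y ∈ s, f y := by
  have hbd : BddAbove (Set.range fun y => ⨆ _ : y ∈ s, f y) := by
    refine ⟨max B 0, ?_⟩
    rintro _ ⟨y, rfl⟩
    dsimp only
    by_cases hy : y ∈ s
    · rw [ciSup_pos (f := fun _ : y ∈ s => f y) hy]
      exact le_trans (hB y hy) (le_max_left _ _)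
    · have : IsEmpty (y ∈ s) := ⟨hy⟩
      rw [Real.iSup_of_isEmpty]
      exact le_max_right _ _
  calc f x = ⨆ _ : x ∈ s, f x := (ciSup_pos (f := fun _ : x ∈ s => f x) hx).symm
    _ ≤ ⨆ y ∈ s, f y := le_ciSup hbd x



/-- The explicit six-point midpoint formula
(1/96)[u(a−2h) − 9u(a−h) + 56u(a) + 56u(a+h) − 9u(a+2h) + u(a+3h)]
obtained by inserting the collocation-polynomial gradients into the cubic
Hermite midpoint formula is fourth-order accurate. -/
theorem six_point_midpoint_formula
    (u : ℝ → ℝ) (a h : ℝ) (hh : 0 < h)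
    (hu : ContDiffOn ℝ 5 u (Set.Icc (a - 2 * h) (a + 3 * h))) :
    |u (a + h / 2)
        - (1 / 96) * (u (a - 2 * h) - 9 * u (a - h) + 56 * u a + 56 * u (a + h)
            - 9 * u (a + 2 * h) + u (a + 3 * h))|
      ≤ (h ^ 4 / 384) * (⨆ s ∈ Set.Icc (a - 2 * h) (a + 3 * h),
            |iteratedDerivWithin 4 u (Set.Icc (a - 2 * h) (a + 3 * h)) s|)
        + (h ^ 5 / 72) * ⨆ s ∈ Set.Icc (a - 2 * h) (a + 3 * h),
            |iteratedDerivWithin 5 u (Set.Icc (a - 2 * h) (a + 3 * h)) s| := by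
  have hlh : a - 2 * h < a + 3 * h := by linarith
  set I := Set.Icc (a - 2 * h) (a + 3 * h) with hI
  set O := Set.Ioo (a - 2 * h) (a + 3 * h) with hO
  set M4 := ⨆ s ∈ I, |iteratedDerivWithin 4 u I s| with hM4def
  set M5 := ⨆ s ∈ I, |iteratedDerivWithin 5 u I s| with hM5def
  have hOI : O ⊆ I := Set.Ioo_subset_Icc_self
  have huO : ContDiffOn ℝ 5 u O := hu.mono hOI
  -- within-derivatives on I agree with global derivatives on O
  have hIeq : ∀ (n : ℕ) (x : ℝ), x ∈ O → iteratedDerivWithin n u I x = iteratedDeriv n u x := by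
    intro n x hx
    have hst : I =ᶠ[nhds x] O := by
      rw [Filter.eventuallyEq_set]
      filter_upwards [isOpen_Ioo.mem_nhds hx] with y hy
      exact iff_of_true (hOI hy) hy
    rw [iteratedDerivWithin_eq_iteratedFDerivWithin, iteratedDeriv_eq_iteratedFDeriv,
      iteratedFDerivWithin_congr_set hst,
      iteratedFDerivWithin_of_isOpen (𝕜 := ℝ) (f := u) n isOpen_Ioo hx]
  -- global derivatives chain on O
  have F4 : ∀ n : ℕ, n < 5 → ∀ x ∈ O, HasDerivAt (iteratedDeriv n u)
      (iteratedDeriv (n + 1) u x) x := by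
    intro n hn x hx
    have hdiff : DifferentiableOn ℝ (iteratedDerivWithin n u O) O :=
      huO.differentiableOn_iteratedDerivWithin (by exact_mod_cast hn) isOpen_Ioo.uniqueDiffOn
    have heq : ∀ y ∈ O, iteratedDerivWithin n u O y = iteratedDeriv n u y := by
      intro y hy
      rw [iteratedDerivWithin_eq_iteratedFDerivWithin, iteratedDeriv_eq_iteratedFDeriv,
        iteratedFDerivWithin_of_isOpen (𝕜 := ℝ) (f := u) n isOpen_Ioo hy]
    have hev : iteratedDeriv n u =ᶠ[nhds x] iteratedDerivWithin n u O := by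
      filter_upwards [isOpen_Ioo.mem_nhds hx] with y hy
      exact (heq y hy).symm
    have hx' : DifferentiableAt ℝ (iteratedDeriv n u) x :=
      hev.differentiableAt_iff.2 ((hdiff x hx).differentiableAt (isOpen_Ioo.mem_nhds hx))
    rw [iteratedDeriv_succ]
    exact hx'.hasDerivAt
  -- sup bounds
  have hb4 : ∀ x ∈ I, |iteratedDerivWithin 4 u I x| ≤ M4 := by
    intro x hx
    have hcont4 : ContinuousOn (iteratedDerivWithin 4 u I) I :=
      hu.continuousOn_iteratedDerivWithin (by norm_num) (uniqueDiffOn_Icc hlh)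
    have himg : ∃ B, ∀ y ∈ I, |iteratedDerivWithin 4 u I y| ≤ B := by
      obtain ⟨B, hB⟩ := (isCompact_Icc.image_of_continuousOn hcont4.abs).bddAbove
      exact ⟨B, fun y hy => hB ⟨y, hy, rfl⟩⟩
    obtain ⟨B, hB⟩ := himg
    exact sixpt_le_biSup B hB hx
  have hb5 : ∀ x ∈ I, |iteratedDerivWithin 5 u I x| ≤ M5 := by
    intro x hx
    have hcont5 : ContinuousOn (iteratedDerivWithin 5 u I) I :=
      hu.continuousOn_iteratedDerivWithin (by norm_num) (uniqueDiffOn_Icc hlh)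
    have himg : ∃ B, ∀ y ∈ I, |iteratedDerivWithin 5 u I y| ≤ B := by
      obtain ⟨B, hB⟩ := (isCompact_Icc.image_of_continuousOn hcont5.abs).bddAbove
      exact ⟨B, fun y hy => hB ⟨y, hy, rfl⟩⟩
    obtain ⟨B, hB⟩ := himg
    exact sixpt_le_biSup B hB hx
  -- Lipschitz bounds on O
  have lip : ∀ (n : ℕ) (M : ℝ), n < 5 → (∀ x ∈ I, |iteratedDerivWithin (n + 1) u I x| ≤ M) →
      ∀ x ∈ O, ∀ y ∈ O, |iteratedDeriv n u x - iteratedDeriv n u y| ≤ M * |x - y| := by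
    intro n M hn hM x hx y hy
    have := (convex_Ioo (a - 2 * h) (a + 3 * h)).norm_image_sub_le_of_norm_hasDerivWithin_le
      (f := iteratedDeriv n u) (f' := iteratedDeriv (n + 1) u) (C := M)
      (fun z hz => (F4 n hn z hz).hasDerivWithinAt)
      (fun z hz => by
        rw [Real.norm_eq_abs, ← hIeq (n + 1) z hz]
        exact hM z (hOI hz)) hy hx
    simpa [Real.norm_eq_abs, abs_sub_comm] using this
  have lip3 := lip 3 M4 (by norm_num) hb4
  have lip4 := lip 4 M5 (by norm_num) hb5
  -- Hermite midpoint estimate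
  have hsubH : Set.Icc (a + h / 2 - h / 2) (a + h / 2 + h / 2) ⊆ O := by
    intro x hx
    obtain ⟨h1, h2⟩ := hx
    constructor <;> [linarith; linarith]
  have hherm := sixpt_hermite u (iteratedDeriv 1 u) (iteratedDeriv 2 u) (iteratedDeriv 3 u)
    (a + h / 2) (h / 2) M4 (by linarith)
    (fun x hx => by simpa using F4 0 (by norm_num) x (hsubH hx))
    (fun x hx => F4 1 (by norm_num) x (hsubH hx))
    (fun x hx => F4 2 (by norm_num) x (hsubH hx))
    (fun x hx => fun y hy => lip3 x (hsubH hx) y (hsubH hy))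
  rw [show a + h / 2 - h / 2 = a by ring, show a + h / 2 + h / 2 = a + h by ring] at hherm
  -- gradient estimates
  have hgrad : ∀ b : ℝ, Set.Icc (b - 2 * h) (b + 2 * h) ⊆ I →
      Set.Ioo (b - 2 * h) (b + 2 * h) ⊆ O →
      |12 * (h * iteratedDeriv 1 u b) - (8 * u (b + 1 * h) - 8 * u (b + (-1) * h)
        + u (b + (-2) * h) - u (b + 2 * h))| ≤ 2 / 3 * M5 * h ^ 5 := by
    intro b hIb hOb
    exact sixpt_grad u (iteratedDeriv 1 u) (iteratedDeriv 2 u) (iteratedDeriv 3 u)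
      (iteratedDeriv 4 u) b h M5 hh
      (hu.continuousOn.mono hIb)
      (fun x hx => by simpa using F4 0 (by norm_num) x (hOb hx))
      (fun x hx => F4 1 (by norm_num) x (hOb hx))
      (fun x hx => F4 2 (by norm_num) x (hOb hx))
      (fun x hx => F4 3 (by norm_num) x (hOb hx))
      (fun x hx => fun y hy => lip4 x (hOb hx) y (hOb hy))
  have hga := hgrad a
    (fun x hx => ⟨by linarith [hx.1], by linarith [hx.2]⟩)
    (fun x hx => ⟨by linarith [hx.1], by linarith [hx.2]⟩)
  have hgb := hgrad (a + h)
    (fun x hx => ⟨by linarith [hx.1], by linarith [hx.2]⟩)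
    (fun x hx => ⟨by linarith [hx.1], by linarith [hx.2]⟩)
  rw [show a + 1 * h = a + h by ring, show a + (-1) * h = a - h by ring,
    show a + (-2) * h = a - 2 * h by ring] at hga
  rw [show a + h + 1 * h = a + 2 * h by ring, show a + h + (-1) * h = a by ring,
    show a + h + (-2) * h = a - h by ring, show a + h + 2 * h = a + 3 * h by ring] at hgb
  -- assembly
  have key : u (a + h / 2)
      - (1 / 96) * (u (a - 2 * h) - 9 * u (a - h) + 56 * u a + 56 * u (a + h)
          - 9 * u (a + 2 * h) + u (a + 3 * h))
      = (u (a + h / 2) - ((u a + u (a + h)) / 2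
          + h / 2 / 4 * (iteratedDeriv 1 u a - iteratedDeriv 1 u (a + h))))
        + (1 / 96) * ((12 * (h * iteratedDeriv 1 u a)
            - (8 * u (a + h) - 8 * u (a - h) + u (a - 2 * h) - u (a + 2 * h)))
          - (12 * (h * iteratedDeriv 1 u (a + h))
            - (8 * u (a + 2 * h) - 8 * u a + u (a - h) - u (a + 3 * h)))) := by
    ring
  rw [key]
  have tri : ∀ x y z : ℝ, |x + (1 / 96) * (y - z)| ≤ |x| + (1 / 96) * (|y| + |z|) := by
    intro x y z
    calc |x + (1 / 96) * (y - z)| ≤ |x| + |(1 / 96) * (y - z)| := abs_add_le _ _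
      _ = |x| + (1 / 96) * |y - z| := by
          rw [abs_mul, abs_of_nonneg (by norm_num : (0:ℝ) ≤ 1 / 96)]
      _ ≤ |x| + (1 / 96) * (|y| + |z|) := by
          have hyz : |y - z| ≤ |y| + |z| := (abs_sub y z)
          linarith
  refine le_trans (tri _ _ _) ?_
  have e1 : M4 * (h / 2) ^ 4 / 24 = h ^ 4 / 384 * M4 := by ring
  linarith [hherm, hga, hgb]
end

section
/- Let u : ℝ² × [0,T] → ℝ solve the two-dimensional heat equation ∂u/∂t = ∂²u/∂x² + ∂²u/∂y² on Ω × (0,T], and suppose all spatial partial derivatives of u of order up to 6 are continuous and bounded on a neighborhood of Ω̄ × [0,T]. For h > 0 define the shift differences δ²ₓv(x,y,t) = v(x-h,y,t) − 2v(x,y,t) + v(x+h,y,t) and δ²ᵧv(x,y,t) = v(x,y-h,t) − 2v(x,y,t) + v(x,y+h,t). Then there exists C ≥ 0, depending only on the suprema of the spatial derivatives of u of order up to 6, such that at every point (x,y,t) whose h-neighborhood in space lies in Ω: | (1 + δ²ₓ/12 + δ²ᵧ/12)(∂u/∂t)(x,y,t) − (1/h²)·(1 + δ²ᵧ/12)(δ²ₓ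 u)(x,y,t) − (1/h²)·(1 + δ²ₓ/12)(δ²ᵧ u)(x,y,t) | ≤ C·h⁴. -/
/-- Central second difference with step `h` in the first (x) variable of a
function of two real variables. -/
def deltaX (h : ℝ) (v : ℝ → ℝ → ℝ) (x y : ℝ) : ℝ :=
  v (x - h) y - 2 * v x y + v (x + h) y

/-- Central second difference with step `h` in the second (y) variable of a
function of two real variables. -/
def deltaY (h : ℝ) (v : ℝ → ℝ → ℝ) (x y : ℝ) : ℝ :=
  v x (y - h) - 2 * v x y + v x (y + h)

open Set

lemma myIDW {f : ℝ → ℝ} {n m : ℕ} (hf : ContDiff ℝ (n:ℕ∞) f) (hm : m ≤ n)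
    {s : Set ℝ} (hs : UniqueDiffOn ℝ s) {x : ℝ} (hx : x ∈ s) :
    iteratedDerivWithin m f s x = iteratedDeriv m f x := by
  have h1 : HasFTaylorSeriesUpToOn (n:ℕ∞) f (ftaylorSeries ℝ f) s :=
    ((contDiff_iff_ftaylorSeries.mp hf).hasFTaylorSeriesUpToOn s)
  have h2 := h1.eq_iteratedFDerivWithin_of_uniqueDiffOn (m := m) (by exact_mod_cast hm) hs hx
  rw [iteratedDerivWithin_eq_iteratedFDerivWithin, iteratedDeriv_eq_iteratedFDeriv, ← h2]
  rfl

/-- one-sided Taylor estimate to the right, crude constant -/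
lemma taylor_right (n : ℕ) (g : ℝ → ℝ) (hg : ContDiff ℝ ((n:ℕ∞)+1) g) {x h B : ℝ}
    (hh : 0 < h) (hB : ∀ ξ ∈ Icc x (x+h), |iteratedDeriv (n+1) g ξ| ≤ B) :
    |g (x+h) - ∑ k ∈ Finset.range (n+1), h^k / (k.factorial : ℝ) * iteratedDeriv k g x|
      ≤ B * h^(n+1) := by
  have hxx : x ≤ x + h := by linarith
  have hcd : ContDiffOn ℝ (n+1 : ℕ) g (Icc x (x+h)) := (hg.of_le (by norm_cast)).contDiffOn
  have hC : ∀ y ∈ Icc x (x+h), ‖iteratedDerivWithin (n+1) g (Icc x (x+h)) y‖ ≤ B := by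
    intro y hy
    rw [Real.norm_eq_abs, myIDW (n := n+1) (hg.of_le (by norm_cast)) le_rfl
      (uniqueDiffOn_Icc (by linarith)) hy]
    exact hB y hy
  have hmain := taylor_mean_remainder_bound hxx hcd (right_mem_Icc.mpr hxx) hC
  have heq : taylorWithinEval g n (Icc x (x+h)) x (x+h) =
      ∑ k ∈ Finset.range (n+1), h^k / (k.factorial : ℝ) * iteratedDeriv k g x := by
    rw [taylor_within_apply]
    refine Finset.sum_congr rfl ?_
    intro k hk
    rw [myIDW (n := n+1) (hg.of_le (by norm_cast)) (by
        have := Finset.mem_range.mp hk; omega)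
      (uniqueDiffOn_Icc (by linarith)) (left_mem_Icc.mpr hxx)]
    simp only [smul_eq_mul]
    ring_nf
  rw [heq, Real.norm_eq_abs] at hmain
  have hB0 : 0 ≤ B := le_trans (abs_nonneg _) (hB x (left_mem_Icc.mpr hxx))
  have h1 : (1:ℝ) ≤ (n.factorial : ℝ) := by exact_mod_cast n.factorial_pos
  have h2 : x + h - x = h := by ring
  rw [h2] at hmain
  calc |g (x+h) - ∑ k ∈ Finset.range (n+1), h^k / (k.factorial : ℝ) * iteratedDeriv k g x|
      ≤ B * h^(n+1) / (n.factorial : ℝ) := hmain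
    _ ≤ B * h^(n+1) := by
        apply div_le_self (by positivity) h1

lemma taylor_left (n : ℕ) (g : ℝ → ℝ) (hg : ContDiff ℝ ((n:ℕ∞)+1) g) {x h B : ℝ}
    (hh : 0 < h) (hB : ∀ ξ ∈ Icc (x-h) x, |iteratedDeriv (n+1) g ξ| ≤ B) :
    |g (x-h) - ∑ k ∈ Finset.range (n+1), (-h)^k / (k.factorial : ℝ) * iteratedDeriv k g x|
      ≤ B * h^(n+1) := by
  set G : ℝ → ℝ := fun s => g (-s) with hG
  have hGc : ContDiff ℝ ((n:ℕ∞)+1) G := hg.comp contDiff_neg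
  have hid : ∀ (k : ℕ) (ξ : ℝ), iteratedDeriv k G ξ = (-1:ℝ)^k • iteratedDeriv k g (-ξ) :=
    fun k ξ => iteratedDeriv_comp_neg k g ξ
  have hBb : ∀ ξ ∈ Icc (-x) (-x + h), |iteratedDeriv (n+1) G ξ| ≤ B := by
    intro ξ hξ
    rw [hid, smul_eq_mul, abs_mul, abs_pow, abs_neg, abs_one, one_pow, one_mul]
    exact hB (-ξ) ⟨by linarith [hξ.2], by linarith [hξ.1]⟩
  have := taylor_right n G hGc hh hBb
  have e1 : G (-x + h) = g (x - h) := by rw [hG]; ring_nf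
  have e2 : ∀ k ∈ Finset.range (n+1),
      h^k / (k.factorial : ℝ) * iteratedDeriv k G (-x)
        = (-h)^k / (k.factorial : ℝ) * iteratedDeriv k g x := by
    intro k _
    rw [hid k (-x), neg_neg, smul_eq_mul]
    rw [neg_pow]
    ring
  rw [e1, Finset.sum_congr rfl e2] at this
  exact this

lemma delta2_order6 {g : ℝ → ℝ} (hg : ContDiff ℝ 6 g) {x h B : ℝ} (hh : 0 < h)
    (hB : ∀ ξ ∈ Icc (x-h) (x+h), |iteratedDeriv 6 g ξ| ≤ B) :
    |g (x-h) - 2 * g x + g (x+h) - h^2 * iteratedDeriv 2 g x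
        - h^4/12 * iteratedDeriv 4 g x| ≤ 2*B*h^6 := by
  have hg' : ContDiff ℝ (((5:ℕ):ℕ∞)+1) g := by
    apply hg.of_le; norm_num
  have h1 := taylor_right 5 g hg' hh (fun ξ hξ => hB ξ ⟨by linarith [hξ.1], hξ.2⟩)
  have h2 := taylor_left 5 g hg' hh (fun ξ hξ => hB ξ ⟨hξ.1, by linarith [hξ.2]⟩)
  simp only [Finset.sum_range_succ, Finset.sum_range_zero] at h1 h2
  norm_num [Nat.factorial] at h1 h2
  have key : g (x-h) - 2 * g x + g (x+h) - h^2 * iteratedDeriv 2 g x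
        - h^4/12 * iteratedDeriv 4 g x
      = (g (x+h) - (g x + h * deriv g x + h^2/2 * iteratedDeriv 2 g x
          + h^3/6 * iteratedDeriv 3 g x + h^4/24 * iteratedDeriv 4 g x
          + h^5/120 * iteratedDeriv 5 g x))
        + (g (x-h) - (g x + -(h * deriv g x) + h^2/2 * iteratedDeriv 2 g x
          + (-h)^3/6 * iteratedDeriv 3 g x + (-h)^4/24 * iteratedDeriv 4 g x
          + (-h)^5/120 * iteratedDeriv 5 g x)) := by ring
  rw [key]
  refine le_trans (abs_add_le _ _) ?_
  rw [show ((-h)^4 : ℝ) = h^4 by ring]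
  linarith

lemma delta2_order4 {g : ℝ → ℝ} (hg : ContDiff ℝ 4 g) {x h B : ℝ} (hh : 0 < h)
    (hB : ∀ ξ ∈ Icc (x-h) (x+h), |iteratedDeriv 4 g ξ| ≤ B) :
    |g (x-h) - 2 * g x + g (x+h) - h^2 * iteratedDeriv 2 g x| ≤ 2*B*h^4 := by
  have hg' : ContDiff ℝ (((3:ℕ):ℕ∞)+1) g := by
    apply hg.of_le; norm_num
  have h1 := taylor_right 3 g hg' hh (fun ξ hξ => hB ξ ⟨by linarith [hξ.1], hξ.2⟩)
  have h2 := taylor_left 3 g hg' hh (fun ξ hξ => hB ξ ⟨hξ.1, by linarith [hξ.2]⟩)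
  simp only [Finset.sum_range_succ, Finset.sum_range_zero] at h1 h2
  norm_num [Nat.factorial] at h1 h2
  have key : g (x-h) - 2 * g x + g (x+h) - h^2 * iteratedDeriv 2 g x
      = (g (x+h) - (g x + h * deriv g x + h^2/2 * iteratedDeriv 2 g x
          + h^3/6 * iteratedDeriv 3 g x))
        + (g (x-h) - (g x + -(h * deriv g x) + h^2/2 * iteratedDeriv 2 g x
          + (-h)^3/6 * iteratedDeriv 3 g x)) := by ring
  rw [key]
  refine le_trans (abs_add_le _ _) ?_
  linarith

lemma delta2_order2 {g : ℝ → ℝ} (hg : ContDiff ℝ 2 g) {x h B : ℝ} (hh : 0 < h)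
    (hB : ∀ ξ ∈ Icc (x-h) (x+h), |iteratedDeriv 2 g ξ| ≤ B) :
    |g (x-h) - 2 * g x + g (x+h)| ≤ 2*B*h^2 := by
  have hg' : ContDiff ℝ (((1:ℕ):ℕ∞)+1) g := by
    apply hg.of_le; norm_num
  have h1 := taylor_right 1 g hg' hh (fun ξ hξ => hB ξ ⟨by linarith [hξ.1], hξ.2⟩)
  have h2 := taylor_left 1 g hg' hh (fun ξ hξ => hB ξ ⟨hξ.1, by linarith [hξ.2]⟩)
  simp only [Finset.sum_range_succ, Finset.sum_range_zero] at h1 h2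
  norm_num [Nat.factorial] at h1 h2
  have key : g (x-h) - 2 * g x + g (x+h)
      = (g (x+h) - (g x + h * deriv g x))
        + (g (x-h) - (g x + -(h * deriv g x))) := by ring
  rw [key]
  refine le_trans (abs_add_le _ _) ?_
  linarith

noncomputable def pdv (v : ℝ × ℝ) (F : ℝ × ℝ → ℝ) : ℝ × ℝ → ℝ := fun z => fderiv ℝ F z v

lemma pdv_contDiff {v : ℝ × ℝ} {F : ℝ × ℝ → ℝ} {n m : ℕ}
    (hF : ContDiff ℝ (n : ℕ∞) F) (hm : m + 1 ≤ n) :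
    ContDiff ℝ (m : ℕ∞) (pdv v F) := by
  have : ContDiff ℝ (m : ℕ∞) (fun z : ℝ × ℝ => fderiv ℝ F (id z) ((fun _ => v) z)) := by
    apply ContDiff.fderiv_apply (f := fun (_ : ℝ × ℝ) z => F z) (m := (n : ℕ∞))
    · exact hF.comp contDiff_snd
    · exact contDiff_id
    · exact contDiff_const
    · exact_mod_cast hm
  exact this

lemma pdv_comm {v w : ℝ × ℝ} {F : ℝ × ℝ → ℝ} (hF : ContDiff ℝ 2 F) :
    pdv v (pdv w F) = pdv w (pdv v F) := by
  funext z
  have hd : ∀ y, HasFDerivAt F (fderiv ℝ F y) y := fun y =>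
    (hF.differentiable (by norm_num) y).hasFDerivAt
  have hd2 : DifferentiableAt ℝ (fderiv ℝ F) z := by
    have : ContDiff ℝ (1:ℕ∞) (fderiv ℝ F) := hF.fderiv_right (by norm_num)
    exact (this.differentiable (by norm_num)) z
  have hsymm := second_derivative_symmetric hd hd2.hasFDerivAt
  have comp : ∀ u : ℝ × ℝ, pdv u (pdv w F) z = fderiv ℝ (fderiv ℝ F) z u w := by
    intro u
    have e1 : pdv w F = (fun L : (ℝ × ℝ) →L[ℝ] ℝ => L w) ∘ (fderiv ℝ F) := rfl
    have h1 : HasFDerivAt (pdv w F)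
        (((ContinuousLinearMap.apply ℝ ℝ w).comp (fderiv ℝ (fderiv ℝ F) z))) z := by
      rw [e1]
      exact ((ContinuousLinearMap.apply ℝ ℝ w).hasFDerivAt).comp z hd2.hasFDerivAt
    simp [pdv, h1.fderiv]
  rw [comp v]
  have comp2 : ∀ u : ℝ × ℝ, pdv u (pdv v F) z = fderiv ℝ (fderiv ℝ F) z u v := by
    intro u
    have h1 : HasFDerivAt (pdv v F)
        (((ContinuousLinearMap.apply ℝ ℝ v).comp (fderiv ℝ (fderiv ℝ F) z))) z := by
      exact ((ContinuousLinearMap.apply ℝ ℝ v).hasFDerivAt).comp z hd2.hasFDerivAt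
    simp [pdv, h1.fderiv]
  rw [comp2 w]
  exact hsymm v w

noncomputable abbrev pd1 := pdv ((1:ℝ), (0:ℝ))
noncomputable abbrev pd2 := pdv ((0:ℝ), (1:ℝ))

lemma deriv_slice1 {F : ℝ × ℝ → ℝ} (hF : Differentiable ℝ F) (x q : ℝ) :
    deriv (fun p => F (p, q)) x = pd1 F (x, q) := by
  have h1 : HasFDerivAt (fun p : ℝ => (p, q))
      ((ContinuousLinearMap.id ℝ ℝ).prod 0) x :=
    HasFDerivAt.prodMk (hasFDerivAt_id x) (hasFDerivAt_const q x)
  have h2 := ((hF (x, q)).hasFDerivAt.comp x h1).hasDerivAt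
  simp only [Function.comp_def] at h2
  rw [h2.deriv]
  simp [pdv]

lemma deriv_slice2 {F : ℝ × ℝ → ℝ} (hF : Differentiable ℝ F) (p y : ℝ) :
    deriv (fun q => F (p, q)) y = pd2 F (p, y) := by
  have h1 : HasFDerivAt (fun q : ℝ => (p, q))
      ((0 : ℝ →L[ℝ] ℝ).prod (ContinuousLinearMap.id ℝ ℝ)) y :=
    HasFDerivAt.prodMk (hasFDerivAt_const p y) (hasFDerivAt_id y)
  have h2 := ((hF (p, y)).hasFDerivAt.comp y h1).hasDerivAt
  simp only [Function.comp_def] at h2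
  rw [h2.deriv]
  simp [pdv]

lemma pdv_iter_contDiff {v : ℝ × ℝ} {F : ℝ × ℝ → ℝ} {n m i : ℕ}
    (hF : ContDiff ℝ (n : ℕ∞) F) (hm : m + i ≤ n) :
    ContDiff ℝ (m : ℕ∞) ((pdv v)^[i] F) := by
  induction i generalizing F n with
  | zero => exact hF.of_le (by exact_mod_cast (by omega : m ≤ n))
  | succ i ih =>
    rw [Function.iterate_succ_apply]
    exact ih (n := n - 1) (pdv_contDiff hF (by omega)) (by omega)

lemma iteratedDeriv_slice1 {i n : ℕ} {F : ℝ × ℝ → ℝ}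
    (hF : ContDiff ℝ (n : ℕ∞) F) (hi : i ≤ n) (x q : ℝ) :
    iteratedDeriv i (fun p => F (p, q)) x = pd1^[i] F (x, q) := by
  induction i generalizing F n with
  | zero => simp
  | succ i ih =>
    rw [iteratedDeriv_succ']
    have hdiff : Differentiable ℝ F := hF.differentiable (by exact_mod_cast (by omega : n ≠ 0))
    have : (deriv fun p => F (p, q)) = fun p => pd1 F (p, q) := by
      funext p; exact deriv_slice1 hdiff p q
    rw [this, ih (n := n - 1) (pdv_contDiff hF (by omega)) (by omega),
      ← Function.iterate_succ_apply]

lemma iteratedDeriv_slice2 {i n : ℕ} {F : ℝ × ℝ → ℝ}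
    (hF : ContDiff ℝ (n : ℕ∞) F) (hi : i ≤ n) (p y : ℝ) :
    iteratedDeriv i (fun q => F (p, q)) y = pd2^[i] F (p, y) := by
  induction i generalizing F n with
  | zero => simp
  | succ i ih =>
    rw [iteratedDeriv_succ']
    have hdiff : Differentiable ℝ F := hF.differentiable (by exact_mod_cast (by omega : n ≠ 0))
    have : (deriv fun q => F (p, q)) = fun q => pd2 F (p, q) := by
      funext q; exact deriv_slice2 hdiff p q
    rw [this, ih (n := n - 1) (pdv_contDiff hF (by omega)) (by omega),
      ← Function.iterate_succ_apply]

lemma pd_comm_iter {k : ℕ} {F : ℝ × ℝ → ℝ} (hF : ContDiff ℝ ((k:ℕ∞) + 1) F) :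
    pd2 (pd1^[k] F) = pd1^[k] (pd2 F) := by
  induction k generalizing F with
  | zero => simp
  | succ k ih =>
    rw [Function.iterate_succ_apply, Function.iterate_succ_apply]
    have h1 : ContDiff ℝ ((k:ℕ∞) + 1) (pd1 F) := by
      have : ContDiff ℝ ((k+1 : ℕ) : ℕ∞) (pd1 F) :=
        pdv_contDiff (n := k + 2) (by exact_mod_cast hF) (by omega)
      exact_mod_cast this
    rw [ih h1]
    congr 1
    have hF2 : ContDiff ℝ 2 F := by
      apply hF.of_le
      have h2 : ((2:ℕ) : WithTop ℕ∞) ≤ ((k+1+1:ℕ) : WithTop ℕ∞) := by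
        exact_mod_cast Nat.le_add_left 2 k
      calc (2 : WithTop ℕ∞) = ((2:ℕ) : WithTop ℕ∞) := by norm_cast
        _ ≤ ((k+1+1:ℕ) : WithTop ℕ∞) := h2
        _ = ((k+1:ℕ) : WithTop ℕ∞) + 1 := by push_cast; ring
    exact (pdv_comm hF2).symm

lemma abs3 {p q r m : ℝ} (hp : |p| ≤ m) (hq : |q| ≤ m) (hr : |r| ≤ m) :
    |p - 2*q + r| ≤ 4*m := by
  rw [abs_le] at *
  constructor <;> linarith [hp.1, hp.2, hq.1, hq.2, hr.1, hr.2]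

lemma combo_bound {h B s1 s2 q1 q2 r1 r2 dr ds : ℝ} (hh : 0 < h)
    (h1 : |s1| ≤ 2*B*h^4) (h2 : |s2| ≤ 2*B*h^4)
    (h3 : |q1| ≤ 2*B*h^2) (h4 : |q2| ≤ 2*B*h^2)
    (h5 : |r1| ≤ 2*B*h^6) (h6 : |r2| ≤ 2*B*h^6)
    (h7 : |dr| ≤ 8*B*h^6) (h8 : |ds| ≤ 8*B*h^6) :
    |h^2/12*s1 + h^2/12*s2 - h^4/144*q1 - h^4/144*q2 - r1 - r2 - 1/12*dr - 1/12*ds|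
      ≤ 6*B*h^6 := by
  have hB : 0 ≤ B := by nlinarith [abs_nonneg s1, pow_pos hh 4]
  have t : ∀ p q : ℝ, |p - q| ≤ |p| + |q| := fun p q => by
    rw [sub_eq_add_neg]
    exact (abs_add_le p (-q)).trans (by rw [abs_neg])
  have T : |h^2/12*s1 + h^2/12*s2 - h^4/144*q1 - h^4/144*q2 - r1 - r2 - 1/12*dr - 1/12*ds|
      ≤ |h^2/12*s1| + |h^2/12*s2| + |h^4/144*q1| + |h^4/144*q2| + |r1| + |r2|
        + |1/12*dr| + |1/12*ds| := by
    calc |h^2/12*s1 + h^2/12*s2 - h^4/144*q1 - h^4/144*q2 - r1 - r2 - 1/12*dr - 1/12*ds|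
        ≤ |h^2/12*s1 + h^2/12*s2 - h^4/144*q1 - h^4/144*q2 - r1 - r2 - 1/12*dr| + |1/12*ds| :=
          t _ _
      _ ≤ (|h^2/12*s1 + h^2/12*s2 - h^4/144*q1 - h^4/144*q2 - r1 - r2| + |1/12*dr|) + |1/12*ds| := by
          linarith [t (h^2/12*s1 + h^2/12*s2 - h^4/144*q1 - h^4/144*q2 - r1 - r2) (1/12*dr)]
      _ ≤ ((|h^2/12*s1 + h^2/12*s2 - h^4/144*q1 - h^4/144*q2 - r1| + |r2|) + |1/12*dr|) + |1/12*ds| := by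
          linarith [t (h^2/12*s1 + h^2/12*s2 - h^4/144*q1 - h^4/144*q2 - r1) r2]
      _ ≤ (((|h^2/12*s1 + h^2/12*s2 - h^4/144*q1 - h^4/144*q2| + |r1|) + |r2|) + |1/12*dr|) + |1/12*ds| := by
          linarith [t (h^2/12*s1 + h^2/12*s2 - h^4/144*q1 - h^4/144*q2) r1]
      _ ≤ ((((|h^2/12*s1 + h^2/12*s2 - h^4/144*q1| + |h^4/144*q2|) + |r1|) + |r2|) + |1/12*dr|) + |1/12*ds| := by
          linarith [t (h^2/12*s1 + h^2/12*s2 - h^4/144*q1) (h^4/144*q2)]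
      _ ≤ (((((|h^2/12*s1 + h^2/12*s2| + |h^4/144*q1|) + |h^4/144*q2|) + |r1|) + |r2|) + |1/12*dr|) + |1/12*ds| := by
          linarith [t (h^2/12*s1 + h^2/12*s2) (h^4/144*q1)]
      _ ≤ _ := by
          linarith [abs_add_le (h^2/12*s1) (h^2/12*s2)]
  have e1 : |h^2/12*s1| ≤ B*h^6/6 := by
    rw [abs_mul, abs_of_nonneg (by positivity : (0:ℝ) ≤ h^2/12)]
    calc h^2/12 * |s1| ≤ h^2/12 * (2*B*h^4) :=
          mul_le_mul_of_nonneg_left h1 (by positivity)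
      _ = B*h^6/6 := by ring
  have e2 : |h^2/12*s2| ≤ B*h^6/6 := by
    rw [abs_mul, abs_of_nonneg (by positivity : (0:ℝ) ≤ h^2/12)]
    calc h^2/12 * |s2| ≤ h^2/12 * (2*B*h^4) :=
          mul_le_mul_of_nonneg_left h2 (by positivity)
      _ = B*h^6/6 := by ring
  have e3 : |h^4/144*q1| ≤ B*h^6/72 := by
    rw [abs_mul, abs_of_nonneg (by positivity : (0:ℝ) ≤ h^4/144)]
    calc h^4/144 * |q1| ≤ h^4/144 * (2*B*h^2) :=
          mul_le_mul_of_nonneg_left h3 (by positivity)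
      _ = B*h^6/72 := by ring
  have e4 : |h^4/144*q2| ≤ B*h^6/72 := by
    rw [abs_mul, abs_of_nonneg (by positivity : (0:ℝ) ≤ h^4/144)]
    calc h^4/144 * |q2| ≤ h^4/144 * (2*B*h^2) :=
          mul_le_mul_of_nonneg_left h4 (by positivity)
      _ = B*h^6/72 := by ring
  have e7 : |1/12*dr| ≤ 2*B*h^6/3 := by
    rw [abs_mul, abs_of_nonneg (by norm_num : (0:ℝ) ≤ 1/12)]
    calc 1/12 * |dr| ≤ 1/12 * (8*B*h^6) :=
          mul_le_mul_of_nonneg_left h7 (by norm_num)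
      _ = 2*B*h^6/3 := by ring
  have e8 : |1/12*ds| ≤ 2*B*h^6/3 := by
    rw [abs_mul, abs_of_nonneg (by norm_num : (0:ℝ) ≤ 1/12)]
    calc 1/12 * |ds| ≤ 1/12 * (8*B*h^6) :=
          mul_le_mul_of_nonneg_left h8 (by norm_num)
      _ = 2*B*h^6/3 := by ring
  have hpos : 0 ≤ B * h^6 := by positivity
  linarith [T, e1, e2, e3, e4, h5, h6, e7, e8]

/-- The spatial consistency estimate (equation (3.11) of the paper) for the
two-dimensional high-order compact difference scheme: for a solution of the
two-dimensional heat equation with spatial derivatives of order up to 6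
continuous and bounded (by `B`), the spatial truncation error
`(1 + δ²ₓ/12 + δ²ᵧ/12)(∂u/∂t) − h⁻²(1 + δ²ᵧ/12)δ²ₓu − h⁻²(1 + δ²ₓ/12)δ²ᵧu`
is bounded by `C·h⁴` at every point whose `h`-neighborhood in space lies in
`Ω = (a,b) × (c,d)`, with `C` depending only on `B`. -/
theorem two_dim_hocd_spatial_consistency
    (a b c d T : ℝ) (hab : a < b) (hcd : c < d) (hT : 0 < T) :
    ∀ B : ℝ, 0 ≤ B → ∃ C ≥ (0 : ℝ), ∀ u : ℝ → ℝ → ℝ → ℝ,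
      (∀ t ∈ Set.Icc (0 : ℝ) T, ContDiff ℝ 6 (fun p : ℝ × ℝ => u p.1 p.2 t)) →
      (∀ x ∈ Set.Ioo a b, ∀ y ∈ Set.Ioo c d, ∀ t ∈ Set.Ioc (0 : ℝ) T,
        deriv (fun s => u x y s) t
          = iteratedDeriv 2 (fun p => u p y t) x + iteratedDeriv 2 (fun q => u x q t) y) →
      (∀ i j : ℕ, i + j ≤ 6 → ∀ x ∈ Set.Icc a b, ∀ y ∈ Set.Icc c d,
        ∀ t ∈ Set.Icc (0 : ℝ) T,
          |iteratedDeriv i (fun p => iteratedDeriv j (fun q => u p q t) y) x| ≤ B) →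
      ∀ h : ℝ, 0 < h → ∀ x y t : ℝ,
        a < x - h → x + h < b → c < y - h → y + h < d → t ∈ Set.Ioc (0 : ℝ) T →
          |((fun p q => deriv (fun s => u p q s) t) x y
                + (1 / 12) * deltaX h (fun p q => deriv (fun s => u p q s) t) x y
                + (1 / 12) * deltaY h (fun p q => deriv (fun s => u p q s) t) x y)
              - (1 / h ^ 2) * (deltaX h (fun p q => u p q t) x y
                  + (1 / 12) * deltaY h (deltaX h (fun p q => u p q t)) x y)
              - (1 / h ^ 2) * (deltaY h (fun p q => u p q t) x y
                  + (1 / 12) * deltaX h (deltaY h (fun p q => u p q t)) x y)|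
            ≤ C * h ^ 4 := by
  intro B hB
  refine ⟨6 * B, by positivity, ?_⟩
  intro u hsm hpde hbd h hh x y t hax hxb hcy hyd ht
  have htI : t ∈ Set.Icc (0:ℝ) T := ⟨ht.1.le, ht.2⟩
  set F : ℝ × ℝ → ℝ := fun z => u z.1 z.2 t with hFdef
  have hF : ContDiff ℝ 6 F := hsm t htI
  have hF6 : ContDiff ℝ ((6:ℕ):ℕ∞) F := hF.of_le (by norm_num)
  have hF5 : ContDiff ℝ ((5:ℕ):ℕ∞) F := hF.of_le (by norm_num)
  have hne : h ≠ 0 := ne_of_gt hh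
  -- memberships
  have hxm : x - h ∈ Set.Icc a b := ⟨hax.le, by linarith⟩
  have hx0 : x ∈ Set.Icc a b := ⟨by linarith, by linarith⟩
  have hxp : x + h ∈ Set.Icc a b := ⟨by linarith, hxb.le⟩
  have hym : y - h ∈ Set.Icc c d := ⟨hcy.le, by linarith⟩
  have hy0 : y ∈ Set.Icc c d := ⟨by linarith, by linarith⟩
  have hyp : y + h ∈ Set.Icc c d := ⟨by linarith, hyd.le⟩
  -- bounds in pd form
  have hbd' : ∀ i j : ℕ, i + j ≤ 6 → ∀ x' ∈ Set.Icc a b, ∀ y' ∈ Set.Icc c d,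
      |pd1^[i] (pd2^[j] F) (x', y')| ≤ B := by
    intro i j hij x' hx' y' hy'
    have h0 := hbd i j hij x' hx' y' hy' t htI
    have e1 : (fun p => iteratedDeriv j (fun q => u p q t) y')
        = fun p => pd2^[j] F (p, y') := by
      funext p
      exact iteratedDeriv_slice2 (n := 6) hF6 (by omega) p y'
    rw [e1] at h0
    have hG : ContDiff ℝ ((6 - j : ℕ):ℕ∞) (pd2^[j] F) :=
      pdv_iter_contDiff (n := 6) hF6 (by omega)
    rw [iteratedDeriv_slice1 (n := 6 - j) hG (by omega) x' y'] at h0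
    exact h0
  -- PDE in pd form
  have pdeAt : ∀ x' y' : ℝ, a < x' → x' < b → c < y' → y' < d →
      deriv (fun s => u x' y' s) t = pd1^[2] F (x', y') + pd2^[2] F (x', y') := by
    intro x' y' h1 h2 h3 h4
    rw [hpde x' ⟨h1, h2⟩ y' ⟨h3, h4⟩ t ht]
    congr 1
    · exact iteratedDeriv_slice1 (n := 6) hF6 (by omega) x' y'
    · exact iteratedDeriv_slice2 (n := 6) hF6 (by omega) x' y'
  -- row expansions
  have row : ∀ y' ∈ Set.Icc c d,
      |u (x - h) y' t - 2 * u x y' t + u (x + h) y' t - h^2 * pd1^[2] F (x, y')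
        - h^4/12 * pd1^[4] F (x, y')| ≤ 2*B*h^6 := by
    intro y' hy'
    have hg : ContDiff ℝ 6 (fun p => F (p, y')) := hF.comp (contDiff_id.prodMk contDiff_const)
    have hbnd : ∀ ξ ∈ Set.Icc (x - h) (x + h), |iteratedDeriv 6 (fun p => F (p, y')) ξ| ≤ B := by
      intro ξ hξ
      rw [iteratedDeriv_slice1 (n := 6) hF6 (by omega) ξ y']
      exact hbd' 6 0 (by omega) ξ ⟨by linarith [hξ.1], by linarith [hξ.2]⟩ y' hy'
    have hrow := delta2_order6 hg hh hbnd
    rw [iteratedDeriv_slice1 (n := 6) hF6 (by omega) x y',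
        iteratedDeriv_slice1 (n := 6) hF6 (by omega) x y'] at hrow
    exact hrow
  have col : ∀ x' ∈ Set.Icc a b,
      |u x' (y - h) t - 2 * u x' y t + u x' (y + h) t - h^2 * pd2^[2] F (x', y)
        - h^4/12 * pd2^[4] F (x', y)| ≤ 2*B*h^6 := by
    intro x' hx'
    have hg : ContDiff ℝ 6 (fun q => F (x', q)) := hF.comp (contDiff_const.prodMk contDiff_id)
    have hbnd : ∀ ξ ∈ Set.Icc (y - h) (y + h), |iteratedDeriv 6 (fun q => F (x', q)) ξ| ≤ B := by
      intro ξ hξ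
      rw [iteratedDeriv_slice2 (n := 6) hF6 (by omega) x' ξ]
      exact hbd' 0 6 (by omega) x' hx' ξ ⟨by linarith [hξ.1], by linarith [hξ.2]⟩
    have hcol := delta2_order6 hg hh hbnd
    rw [iteratedDeriv_slice2 (n := 6) hF6 (by omega) x' y,
        iteratedDeriv_slice2 (n := 6) hF6 (by omega) x' y] at hcol
    exact hcol
  -- s1
  have hs1 : |(pd1^[2] F (x - h, y) - 2 * pd1^[2] F (x, y) + pd1^[2] F (x + h, y) - h^2 * pd1^[4] F (x, y))| ≤ 2*B*h^4 := by
    have hG : ContDiff ℝ ((4:ℕ):ℕ∞) (pd1^[2] F) := pdv_iter_contDiff (n := 6) hF6 (by omega)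
    have hg : ContDiff ℝ 4 (fun p => pd1^[2] F (p, y)) :=
      (hG.of_le (by norm_num)).comp (contDiff_id.prodMk contDiff_const)
    have hbnd : ∀ ξ ∈ Set.Icc (x - h) (x + h),
        |iteratedDeriv 4 (fun p => pd1^[2] F (p, y)) ξ| ≤ B := by
      intro ξ hξ
      rw [iteratedDeriv_slice1 (n := 4) hG (by omega) ξ y]
      exact hbd' 6 0 (by omega) ξ ⟨by linarith [hξ.1], by linarith [hξ.2]⟩ y hy0
    have hs := delta2_order4 hg hh hbnd
    rw [iteratedDeriv_slice1 (n := 4) hG (by omega) x y] at hs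
    exact hs
  -- s2
  have hs2 : |(pd2^[2] F (x, y - h) - 2 * pd2^[2] F (x, y) + pd2^[2] F (x, y + h) - h^2 * pd2^[4] F (x, y))| ≤ 2*B*h^4 := by
    have hG : ContDiff ℝ ((4:ℕ):ℕ∞) (pd2^[2] F) := pdv_iter_contDiff (n := 6) hF6 (by omega)
    have hg : ContDiff ℝ 4 (fun q => pd2^[2] F (x, q)) :=
      (hG.of_le (by norm_num)).comp (contDiff_const.prodMk contDiff_id)
    have hbnd : ∀ ξ ∈ Set.Icc (y - h) (y + h),
        |iteratedDeriv 4 (fun q => pd2^[2] F (x, q)) ξ| ≤ B := by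
      intro ξ hξ
      rw [iteratedDeriv_slice2 (n := 4) hG (by omega) x ξ]
      exact hbd' 0 6 (by omega) x hx0 ξ ⟨by linarith [hξ.1], by linarith [hξ.2]⟩
    have hs := delta2_order4 hg hh hbnd
    rw [iteratedDeriv_slice2 (n := 4) hG (by omega) x y] at hs
    exact hs
  -- q1 (needs mixed-derivative symmetry)
  have hq1 : |(pd1^[4] F (x, y - h) - 2 * pd1^[4] F (x, y) + pd1^[4] F (x, y + h))| ≤ 2*B*h^2 := by
    have hG : ContDiff ℝ ((2:ℕ):ℕ∞) (pd1^[4] F) := pdv_iter_contDiff (n := 6) hF6 (by omega)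
    have hg : ContDiff ℝ 2 (fun q => pd1^[4] F (x, q)) :=
      (hG.of_le (by norm_num)).comp (contDiff_const.prodMk contDiff_id)
    have hpd2F : ContDiff ℝ ((5:ℕ):ℕ∞) (pd2 F) := pdv_contDiff (n := 6) hF6 (by omega)
    have hc1 : pd2 (pd1^[4] F) = pd1^[4] (pd2 F) := pd_comm_iter (k := 4) hF5
    have hc2 : pd2 (pd1^[4] (pd2 F)) = pd1^[4] (pd2 (pd2 F)) := pd_comm_iter (k := 4) hpd2F
    have hcomm : pd2^[2] (pd1^[4] F) = pd1^[4] (pd2^[2] F) := by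
      calc pd2^[2] (pd1^[4] F) = pd2 (pd2 (pd1^[4] F)) := rfl
        _ = pd2 (pd1^[4] (pd2 F)) := by rw [hc1]
        _ = pd1^[4] (pd2 (pd2 F)) := hc2
        _ = pd1^[4] (pd2^[2] F) := rfl
    have hbnd : ∀ ξ ∈ Set.Icc (y - h) (y + h),
        |iteratedDeriv 2 (fun q => pd1^[4] F (x, q)) ξ| ≤ B := by
      intro ξ hξ
      rw [iteratedDeriv_slice2 (n := 2) hG (by omega) x ξ, hcomm]
      exact hbd' 4 2 (by omega) x hx0 ξ ⟨by linarith [hξ.1], by linarith [hξ.2]⟩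
    exact delta2_order2 hg hh hbnd
  -- q2
  have hq2 : |(pd2^[4] F (x - h, y) - 2 * pd2^[4] F (x, y) + pd2^[4] F (x + h, y))| ≤ 2*B*h^2 := by
    have hG : ContDiff ℝ ((2:ℕ):ℕ∞) (pd2^[4] F) := pdv_iter_contDiff (n := 6) hF6 (by omega)
    have hg : ContDiff ℝ 2 (fun p => pd2^[4] F (p, y)) :=
      (hG.of_le (by norm_num)).comp (contDiff_id.prodMk contDiff_const)
    have hbnd : ∀ ξ ∈ Set.Icc (x - h) (x + h),
        |iteratedDeriv 2 (fun p => pd2^[4] F (p, y)) ξ| ≤ B := by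
      intro ξ hξ
      rw [iteratedDeriv_slice1 (n := 2) hG (by omega) ξ y]
      exact hbd' 2 4 (by omega) ξ ⟨by linarith [hξ.1], by linarith [hξ.2]⟩ y hy0
    exact delta2_order2 hg hh hbnd
  have hdr : |((u (x - h) (y - h) t - 2 * u x (y - h) t + u (x + h) (y - h) t - h^2 * pd1^[2] F (x, (y - h)) - h^4/12 * pd1^[4] F (x, (y - h))) - 2 * (u (x - h) y t - 2 * u x y t + u (x + h) y t - h^2 * pd1^[2] F (x, y) - h^4/12 * pd1^[4] F (x, y)) + (u (x - h) (y + h) t - 2 * u x (y + h) t + u (x + h) (y + h) t - h^2 * pd1^[2] F (x, (y + h)) - h^4/12 * pd1^[4] F (x, (y + h))))| ≤ 8*B*h^6 := by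
    have := abs3 (row (y - h) hym) (row y hy0) (row (y + h) hyp)
    linarith
  have hds : |((u (x - h) (y - h) t - 2 * u (x - h) y t + u (x - h) (y + h) t - h^2 * pd2^[2] F ((x - h), y) - h^4/12 * pd2^[4] F ((x - h), y)) - 2 * (u x (y - h) t - 2 * u x y t + u x (y + h) t - h^2 * pd2^[2] F (x, y) - h^4/12 * pd2^[4] F (x, y)) + (u (x + h) (y - h) t - 2 * u (x + h) y t + u (x + h) (y + h) t - h^2 * pd2^[2] F ((x + h), y) - h^4/12 * pd2^[4] F ((x + h), y)))| ≤ 8*B*h^6 := by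
    have := abs3 (col (x - h) hxm) (col x hx0) (col (x + h) hxp)
    linarith
  have hc := combo_bound hh hs1 hs2 hq1 hq2 (row y hy0) (col x hx0) hdr hds
  have main : ((fun p q => deriv (fun s => u p q s) t) x y
                + (1 / 12) * deltaX h (fun p q => deriv (fun s => u p q s) t) x y
                + (1 / 12) * deltaY h (fun p q => deriv (fun s => u p q s) t) x y)
              - (1 / h ^ 2) * (deltaX h (fun p q => u p q t) x y
                  + (1 / 12) * deltaY h (deltaX h (fun p q => u p q t)) x y)
              - (1 / h ^ 2) * (deltaY h (fun p q => u p q t) x y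
                  + (1 / 12) * deltaX h (deltaY h (fun p q => u p q t)) x y)
      = (1/h^2) * (h^2/12*(pd1^[2] F (x - h, y) - 2 * pd1^[2] F (x, y) + pd1^[2] F (x + h, y) - h^2 * pd1^[4] F (x, y)) + h^2/12*(pd2^[2] F (x, y - h) - 2 * pd2^[2] F (x, y) + pd2^[2] F (x, y + h) - h^2 * pd2^[4] F (x, y)) - h^4/144*(pd1^[4] F (x, y - h) - 2 * pd1^[4] F (x, y) + pd1^[4] F (x, y + h)) - h^4/144*(pd2^[4] F (x - h, y) - 2 * pd2^[4] F (x, y) + pd2^[4] F (x + h, y))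
        - (u (x - h) y t - 2 * u x y t + u (x + h) y t - h^2 * pd1^[2] F (x, y) - h^4/12 * pd1^[4] F (x, y)) - (u x (y - h) t - 2 * u x y t + u x (y + h) t - h^2 * pd2^[2] F (x, y) - h^4/12 * pd2^[4] F (x, y))
        - 1/12*((u (x - h) (y - h) t - 2 * u x (y - h) t + u (x + h) (y - h) t - h^2 * pd1^[2] F (x, (y - h)) - h^4/12 * pd1^[4] F (x, (y - h))) - 2 * (u (x - h) y t - 2 * u x y t + u (x + h) y t - h^2 * pd1^[2] F (x, y) - h^4/12 * pd1^[4] F (x, y)) + (u (x - h) (y + h) t - 2 * u x (y + h) t + u (x + h) (y + h) t - h^2 * pd1^[2] F (x, (y + h)) - h^4/12 * pd1^[4] F (x, (y + h)))) - 1/12*((u (x - h) (y - h) t - 2 * u (x - h) y t + u (x - h) (y + h) t - h^2 * pd2^[2] F ((x - h), y) - h^4/12 * pd2^[4] F ((x - h), y)) - 2 * (u x (y - h) t - 2 * u x y t + u x (y + h) t - h^2 * pd2^[2] F (x, y) - h^4/12 * pd2^[4] F (x, y)) + (u (x + h) (y - h) t - 2 * u (x + h) y t + u (x + h) (y + h)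 t - h^2 * pd2^[2] F ((x + h), y) - h^4/12 * pd2^[4] F ((x + h), y)))) := by
    simp only [deltaX, deltaY]
    rw [pdeAt x y (by linarith) (by linarith) (by linarith) (by linarith),
        pdeAt (x - h) y hax (by linarith) (by linarith) (by linarith),
        pdeAt (x + h) y (by linarith) hxb (by linarith) (by linarith),
        pdeAt x (y - h) (by linarith) (by linarith) hcy (by linarith),
        pdeAt x (y + h) (by linarith) (by linarith) (by linarith) hyd]
    field_simp
    ring
  rw [main, abs_mul, abs_of_nonneg (show (0:ℝ) ≤ 1/h^2 by positivity)]
  refine le_trans (mul_le_mul_of_nonneg_left hc (by positivity : (0:ℝ) ≤ 1/h^2)) (le_of_eq ?_)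
  field_simp
end
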